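/- arXiv:0911.0318 — 6 statements merged into one kernel-verified Lean document; each statement's English description precedes it below -/
import Mathlib

section
/- Let $(\gamma_n)$ be distinct real numbers, $(v_n)$ positive with $\sum_n v_n/(1+\gamma_n^2) < \infty$, $\varphi(z) = \sum_n v_n(\frac{1}{\gamma_n-z} - \frac{\gamma_n}{1+\gamma_n^2})$, and fix $\alpha \in \mathbb{R}$. If $\lambda, \mu \in (\Gamma,v)^*$ are distinct real points with $\varphi(\lambda) = \varphi(\mu) = \alpha$, then the sequences $(1/(\lambda - \gamma_n))_n$ and $(1/(\mu - \gamma_n))_n$ are orthogonal in the weighted space $\ell^2_v$, i.e., $\sum_n \frac{v_n}{(\lambda-\gamma_n)(\mu-\gamma_n)} = 0$. -/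
lemma stmt_5_aux (γ : ℕ → ℝ) (v : ℕ → ℝ) (hv : ∀ n, 0 < v n)
    (hadm : Summable (fun n => v n / (1 + (γ n) ^ 2))) (x : ℝ) (hx₁ : ∀ n, x ≠ γ n)
    (hx₂ : Summable (fun n => v n / (x - γ n) ^ 2)) :
    Summable (fun n => v n * (1 / (γ n - x) - γ n / (1 + (γ n) ^ 2))) := by
  have hb : Summable (fun n => 1/2 * (v n / (x - γ n) ^ 2) + (1 + x^2)/2 * (v n / (1 + (γ n)^2))) :=
    (hx₂.mul_left _).add (hadm.mul_left _)
  refine summable_abs_iff.mp (hb.of_nonneg_of_le (fun n => abs_nonneg _) fun n => ?_)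
  have hd : γ n - x ≠ 0 := sub_ne_zero.mpr (hx₁ n).symm
  have h1 : (0:ℝ) < 1 + γ n ^ 2 := by positivity
  set a : ℝ := 1 / (γ n - x) with ha
  set b : ℝ := (1 + γ n * x) / (1 + γ n ^ 2) with hbdef
  have hfe : v n * (1 / (γ n - x) - γ n / (1 + (γ n) ^ 2)) = v n * (a * b) := by
    rw [ha, hbdef]; field_simp
    ring
  rw [hfe, abs_mul, abs_of_pos (hv n), abs_mul]
  have hab : |a| * |b| ≤ (a^2 + b^2)/2 := by
    nlinarith [sq_nonneg (|a| - |b|), sq_abs a, sq_abs b]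
  have ha2 : a^2 = 1 / (x - γ n)^2 := by
    rw [ha]; rw [div_pow, one_pow]; congr 1; ring
  have hb2 : b^2 ≤ (1 + x^2) / (1 + γ n ^ 2) := by
    rw [hbdef, div_pow, div_le_div_iff₀ (by positivity) h1]
    nlinarith [sq_nonneg (γ n - x), sq_nonneg (γ n * x - 1)]
  have := mul_le_mul_of_nonneg_left hab (hv n).le
  calc v n * (|a| * |b|) ≤ v n * ((a^2 + b^2)/2) := this
    _ ≤ 1/2 * (v n / (x - γ n) ^ 2) + (1 + x^2)/2 * (v n / (1 + (γ n)^2)) := by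
        rw [ha2]
        have h5 := mul_le_mul_of_nonneg_left hb2 (hv n).le
        have e1 : v n / (x - γ n)^2 = v n * (1/(x - γ n)^2) := by ring
        have e2 : v n * ((1 + x^2) / (1 + γ n ^2)) = (1 + x^2) * (v n / (1 + γ n^2)) := by ring
        rw [e2] at h5
        rw [e1]
        nlinarith [h5]

/-- If `λ ≠ μ` are real points of `(Γ,v)*` with `φ(λ) = φ(μ) = α`, then the sequences
`(1/(λ-γ n))` and `(1/(μ-γ n))` are orthogonal in `ℓ²_v`:
`∑ v n /((λ-γ n)(μ-γ n)) = 0`. -/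
theorem stmt_5 (γ : ℕ → ℝ) (hγ : Function.Injective γ) (v : ℕ → ℝ) (hv : ∀ n, 0 < v n)
    (hadm : Summable (fun n => v n / (1 + (γ n) ^ 2))) (α : ℝ) (lam mu : ℝ) (hne : lam ≠ mu)
    (hl₁ : ∀ n, lam ≠ γ n) (hl₂ : Summable (fun n => v n / (lam - γ n) ^ 2))
    (hm₁ : ∀ n, mu ≠ γ n) (hm₂ : Summable (fun n => v n / (mu - γ n) ^ 2))
    (hlα : ∑' n, v n * (1 / (γ n - lam) - γ n / (1 + (γ n) ^ 2)) = α)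
    (hmα : ∑' n, v n * (1 / (γ n - mu) - γ n / (1 + (γ n) ^ 2)) = α) :
    ∑' n, v n / ((lam - γ n) * (mu - γ n)) = 0 := by
  have hf := stmt_5_aux γ v hv hadm lam hl₁ hl₂
  have hg := stmt_5_aux γ v hv hadm mu hm₁ hm₂
  have hlm : lam - mu ≠ 0 := sub_ne_zero.mpr hne
  have key : ∀ n, v n * (1 / (γ n - lam) - γ n / (1 + (γ n) ^ 2))
      - v n * (1 / (γ n - mu) - γ n / (1 + (γ n) ^ 2))
      = (lam - mu) * (v n / ((lam - γ n) * (mu - γ n))) := by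
    intro n
    have h1 : γ n - lam ≠ 0 := sub_ne_zero.mpr (hl₁ n).symm
    have h2 : γ n - mu ≠ 0 := sub_ne_zero.mpr (hm₁ n).symm
    have h3 : lam - γ n ≠ 0 := sub_ne_zero.mpr (hl₁ n)
    have h4 : mu - γ n ≠ 0 := sub_ne_zero.mpr (hm₁ n)
    field_simp
    ring
  have hsub : ∑' n, (v n * (1 / (γ n - lam) - γ n / (1 + (γ n) ^ 2))
      - v n * (1 / (γ n - mu) - γ n / (1 + (γ n) ^ 2))) = 0 := by
    rw [Summable.tsum_sub hf hg, hlα, hmα, sub_self]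
  have h0 : ∑' n, (lam - mu) * (v n / ((lam - γ n) * (mu - γ n))) = 0 := by
    rw [← hsub]; exact tsum_congr fun n => (key n).symm
  rw [tsum_mul_left] at h0
  rcases mul_eq_zero.mp h0 with h | h
  · exact absurd h hlm
  · exact h
end

section
/- Let $(\gamma_n)$ be distinct real numbers, $(v_n)$ positive with $\sum_n v_n/(1+\gamma_n^2)<\infty$, and let $\varphi$ be the associated Herglotz function. For any real $\alpha$, the level set $\Lambda(\alpha) = \{\lambda \in (\Gamma,v)^* \cap \mathbb{R} : \varphi(\lambda) = \alpha\}$ is countable. -/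
/-- Summability of the Herglotz series at a regular point. -/
lemma summable_phi_aux (γ v : ℕ → ℝ) (x : ℝ) (hv : ∀ n, 0 < v n) (hx : ∀ n, x ≠ γ n)
    (hs : Summable (fun n => v n / (x - γ n) ^ 2))
    (hadm : Summable (fun n => v n / (1 + (γ n) ^ 2))) :
    Summable (fun n => v n * (1 / (γ n - x) - γ n / (1 + (γ n) ^ 2))) := by
  have hR : Summable
      (fun n => (v n / (x - γ n) ^ 2 + (1 + x ^ 2) * (v n / (1 + (γ n) ^ 2))) / 2) :=
    (hs.add (hadm.mul_left _)).div_const 2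
  refine Summable.of_abs (Summable.of_nonneg_of_le (fun n => abs_nonneg _) (fun n => ?_) hR)
  have hg : x ≠ γ n := hx n
  have hgx : γ n - x ≠ 0 := sub_ne_zero.mpr fun h => hg h.symm
  have hden : (0:ℝ) < 1 + (γ n) ^ 2 := by positivity
  have hw : 0 ≤ v n := (hv n).le
  have hsq : Real.sqrt (v n) * Real.sqrt (v n) = v n := Real.mul_self_sqrt hw
  set p := Real.sqrt (v n) / (γ n - x) with hp
  set q := Real.sqrt (v n) * (1 + γ n * x) / (1 + (γ n) ^ 2) with hq
  have hA : v n * (1 / (γ n - x) - γ n / (1 + (γ n) ^ 2)) = p * q := by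
    rw [hp, hq, ← hsq]; field_simp
    have h' : Real.sqrt (Real.sqrt (v n) ^ 2) ^ 2 = v n := by
      rw [Real.sq_sqrt (sq_nonneg _), Real.sq_sqrt hw]
    linear_combination (1 + γ n * x) * hsq - (1 + γ n * x) * h'
  have hp2 : p ^ 2 = v n / (x - γ n) ^ 2 := by
    rw [hp, div_pow, sq, hsq, show (γ n - x) ^ 2 = (x - γ n) ^ 2 by ring]
  have hq2 : q ^ 2 ≤ (1 + x ^ 2) * (v n / (1 + (γ n) ^ 2)) := by
    rw [hq, div_pow, mul_pow, sq (Real.sqrt (v n)), hsq,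
      show (1 + x ^ 2) * (v n / (1 + (γ n) ^ 2)) = (1 + x ^ 2) * v n / (1 + (γ n) ^ 2) by ring,
      div_le_div_iff₀ (by positivity) hden]
    nlinarith [mul_nonneg (mul_nonneg hw (sq_nonneg (γ n - x))) hden.le]
  have hpq : |p * q| ≤ (p ^ 2 + q ^ 2) / 2 := by
    rw [abs_mul]
    nlinarith [sq_abs p, sq_abs q, sq_nonneg (|p| - |q|), abs_nonneg p, abs_nonneg q]
  rw [hA]
  calc |p * q| ≤ (p ^ 2 + q ^ 2) / 2 := hpq
    _ ≤ (v n / (x - γ n) ^ 2 + (1 + x ^ 2) * (v n / (1 + (γ n) ^ 2))) / 2 := by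
        rw [hp2]; linarith

/-- Orthogonality relation between two points of the level set. -/
lemma orth_aux (γ v : ℕ → ℝ) (hv : ∀ n, 0 < v n)
    (hadm : Summable (fun n => v n / (1 + (γ n) ^ 2))) (α : ℝ) (l m : ℝ)
    (hl1 : ∀ n, l ≠ γ n) (hl2 : Summable (fun n => v n / (l - γ n) ^ 2))
    (hl3 : ∑' n, v n * (1 / (γ n - l) - γ n / (1 + (γ n) ^ 2)) = α)
    (hm1 : ∀ n, m ≠ γ n) (hm2 : Summable (fun n => v n / (m - γ n) ^ 2))
    (hm3 : ∑' n, v n * (1 / (γ n - m) - γ n / (1 + (γ n) ^ 2)) = α)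
    (hne : l ≠ m) :
    HasSum (fun n => v n / ((l - γ n) * (m - γ n))) 0 := by
  have Sl := summable_phi_aux γ v l hv hl1 hl2 hadm
  have Sm := summable_phi_aux γ v m hv hm1 hm2 hadm
  have hsub : HasSum (fun n => v n * (1 / (γ n - l) - γ n / (1 + (γ n) ^ 2))
      - v n * (1 / (γ n - m) - γ n / (1 + (γ n) ^ 2))) 0 := by
    have h := (Sl.hasSum).sub (Sm.hasSum)
    rwa [hl3, hm3, sub_self] at h
  have hlm : l - m ≠ 0 := sub_ne_zero.mpr hne
  have key : ∀ n, v n * (1 / (γ n - l) - γ n / (1 + (γ n) ^ 2))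
      - v n * (1 / (γ n - m) - γ n / (1 + (γ n) ^ 2))
      = (l - m) * (v n / ((l - γ n) * (m - γ n))) := by
    intro n
    have h1' : l - γ n ≠ 0 := sub_ne_zero.mpr (hl1 n)
    have h2' : m - γ n ≠ 0 := sub_ne_zero.mpr (hm1 n)
    have h1 : γ n - l ≠ 0 := fun h => h1' (by linarith [sub_eq_zero.mp h])
    have h2 : γ n - m ≠ 0 := fun h => h2' (by linarith [sub_eq_zero.mp h])
    field_simp
    ring
  simp only [key] at hsub
  exact (hasSum_mul_left_iff hlm).mp (by simpa using hsub)

set_option maxHeartbeats 1000000 in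
/-- For any real `α`, the level set `Λ(α) = {λ ∈ (Γ,v)* ∩ ℝ : φ(λ) = α}` is countable. -/
theorem stmt_6 (γ : ℕ → ℝ) (hγ : Function.Injective γ) (v : ℕ → ℝ) (hv : ∀ n, 0 < v n)
    (hadm : Summable (fun n => v n / (1 + (γ n) ^ 2))) (α : ℝ) :
    Set.Countable {x : ℝ | (∀ n, x ≠ γ n) ∧ Summable (fun n => v n / (x - γ n) ^ 2) ∧
      ∑' n, v n * (1 / (γ n - x) - γ n / (1 + (γ n) ^ 2)) = α} := by
  set S := {x : ℝ | (∀ n, x ≠ γ n) ∧ Summable (fun n => v n / (x - γ n) ^ 2) ∧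
      ∑' n, v n * (1 / (γ n - x) - γ n / (1 + (γ n) ^ 2)) = α} with hSdef
  rw [← Set.countable_coe_iff]
  -- the vectors in ℓ²
  have hmem : ∀ x : S, Memℓp (fun n => Real.sqrt (v n) / ((x : ℝ) - γ n)) 2 := by
    intro x
    apply memℓp_gen
    refine (x.2.2.1).congr fun n => ?_
    have h1 : (x : ℝ) - γ n ≠ 0 := sub_ne_zero.mpr (x.2.1 n)
    have : ‖Real.sqrt (v n) / ((x : ℝ) - γ n)‖ ^ ((2 : ENNReal).toReal)
        = (Real.sqrt (v n) / ((x : ℝ) - γ n)) ^ 2 := by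
      rw [ENNReal.toReal_ofNat, show (2:ℝ) = ((2:ℕ):ℝ) by norm_num, Real.rpow_natCast,
        Real.norm_eq_abs, sq_abs]
    rw [this, div_pow, Real.sq_sqrt (hv n).le]
  let E : S → lp (fun _ : ℕ => ℝ) 2 := fun x => ⟨fun n => Real.sqrt (v n) / ((x : ℝ) - γ n), hmem x⟩
  have hEapp : ∀ (x : S) (n : ℕ), (E x : ℕ → ℝ) n = Real.sqrt (v n) / ((x : ℝ) - γ n) :=
    fun x n => rfl
  have hE0 : ∀ x : S, E x ≠ 0 := by
    intro x h
    have h0 : (E x : ℕ → ℝ) 0 = 0 := by rw [h]; rfl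
    rw [hEapp] at h0
    have h1 : (x : ℝ) - γ 0 ≠ 0 := sub_ne_zero.mpr (x.2.1 0)
    have h2 : Real.sqrt (v 0) ≠ 0 := by
      simp [Real.sqrt_eq_zero', not_le, hv 0]
    exact (div_ne_zero h2 h1) h0
  have hEnorm : ∀ x : S, ‖E x‖ ≠ 0 := fun x => norm_ne_zero_iff.mpr (hE0 x)
  let u : S → lp (fun _ : ℕ => ℝ) 2 := fun x => (‖E x‖)⁻¹ • E x
  -- inner product of two distinct E's vanishes
  have hinner : ∀ i j : S, i ≠ j → (inner ℝ (E i) (E j) : ℝ) = 0 := by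
    intro i j hij
    have hij' : (i : ℝ) ≠ (j : ℝ) := fun h => hij (Subtype.coe_injective h)
    have horth := orth_aux γ v hv hadm α (i : ℝ) (j : ℝ) i.2.1 i.2.2.1 i.2.2.2
      j.2.1 j.2.2.1 j.2.2.2 hij'
    rw [lp.inner_eq_tsum]
    have : ∀ n, (inner ℝ ((E i : ℕ → ℝ) n) ((E j : ℕ → ℝ) n) : ℝ)
        = v n / (((i : ℝ) - γ n) * ((j : ℝ) - γ n)) := by
      intro n
      rw [RCLike.inner_apply, hEapp, hEapp]
      simp only [starRingEnd_apply, star_trivial]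
      rw [div_mul_div_comm, Real.mul_self_sqrt (hv n).le]
      rw [mul_comm ((j : ℝ) - γ n)]
    rw [tsum_congr this, horth.tsum_eq]
  -- the normalized family is orthonormal
  have hu : Orthonormal ℝ u := by
    rw [orthonormal_iff_ite]
    intro i j
    show (inner ℝ ((‖E i‖)⁻¹ • E i) ((‖E j‖)⁻¹ • E j) : ℝ) = _
    rw [real_inner_smul_left, real_inner_smul_right]
    by_cases hij : i = j
    · subst hij
      have h := hEnorm i
      rw [real_inner_self_eq_norm_sq, if_pos rfl, sq]
      field_simp
    · rw [hinner i j hij, if_neg hij]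
      ring
  -- Bessel's inequality with the first coordinate vector
  let x0 : lp (fun _ : ℕ => ℝ) 2 := lp.single 2 0 (1 : ℝ)
  have hbessel := hu.inner_products_summable x0
  have hcnt := hbessel.countable_support
  have hne : ∀ i : S, ‖(inner ℝ (u i) x0 : ℝ)‖ ^ 2 ≠ 0 := by
    intro i
    have h1 : (inner ℝ (u i) x0 : ℝ) = (u i : ℕ → ℝ) 0 * 1 := by
      rw [lp.inner_single_right]
      simp [RCLike.inner_apply]
    have h3 : (i : ℝ) - γ 0 ≠ 0 := sub_ne_zero.mpr (i.2.1 0)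
    have h4 : Real.sqrt (v 0) ≠ 0 := by
      simp [Real.sqrt_eq_zero', not_le, hv 0]
    have h2 : (u i : ℕ → ℝ) 0 = (‖E i‖)⁻¹ * ((E i : ℕ → ℝ) 0) := by
      show ((‖E i‖)⁻¹ • E i : lp (fun _ : ℕ => ℝ) 2) 0 = _
      rw [lp.coeFn_smul]
      rfl
    have h5 : (u i : ℕ → ℝ) 0 ≠ 0 := by
      rw [h2, hEapp]
      exact mul_ne_zero (inv_ne_zero (hEnorm i)) (div_ne_zero h4 h3)
    rw [h1, mul_one]
    exact pow_ne_zero 2 (norm_ne_zero_iff.mpr h5)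
  have huniv : Function.support
      (fun i : S => ‖(inner ℝ (u i) x0 : ℝ)‖ ^ 2) = Set.univ :=
    Set.eq_univ_of_forall fun i => Function.mem_support.mpr (hne i)
  rw [huniv] at hcnt
  exact Set.countable_univ_iff.mp hcnt
end

section
/- Let $(\gamma_n)$ be distinct real numbers, $(v_n)$ positive with $\sum v_n/(1+\gamma_n^2) < \infty$, $\varphi$ the associated Herglotz function, and $\alpha \in \mathbb{R}$. Suppose $\frac{1}{\alpha - \varphi(z)} = b + \sum_j w_j(\frac{1}{\lambda_j - z} - \frac{\lambda_j}{1+\lambda_j^2})$ on the upper half-plane, where $(\lambda_j)$ are distinct reals, $w_j > 0$, $\sum_j w_j/(1+\lambda_j^2) < \infty$, and $b \in \mathbb{R}$. Then each $\lambda_j$ belongs to $(\Gamma,v)^*$, satisfies $\varphi(\lambda_j) = \alpha$, and $w_j = \big(\sum_n \frac{v_n}{(\lambda_j - \gamma_n)^2}\big)^{-1}$. -/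
open Complex Filter Topology


lemma herg_ne1 (t : ℝ) (z : ℂ) (hz : z.im ≠ 0) : ((t:ℂ) - z) ≠ 0 := by
  intro h; apply hz
  have := congrArg Complex.im h
  simpa using this.symm

lemma herg_ne2 (t : ℝ) : (1 + (t:ℂ)^2) ≠ 0 := by
  have : (1 + (t:ℂ)^2) = ((1 + t^2 : ℝ) : ℂ) := by push_cast; ring
  rw [this]; norm_cast; nlinarith [sq_nonneg t]

lemma herg_eq (t : ℝ) (z : ℂ) (hz : z.im ≠ 0) :
    1 / ((t:ℂ) - z) - (t:ℂ) / (1 + (t:ℂ)^2)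
      = (1 + t*z) / (((t:ℂ) - z) * (1 + (t:ℂ)^2)) := by
  have h1 := herg_ne1 t z hz
  have h2 := herg_ne2 t
  field_simp; ring

/-- the uniform bound `ε‖f t (L+εI)‖ ≤ C/(1+t²)` for `0 < ε ≤ 1`. -/
lemma herg_bound (L t ε : ℝ) (hε : 0 < ε) (hε1 : ε ≤ 1) :
    ε * ‖1 / ((t:ℂ) - ((L:ℂ) + ε*Complex.I)) - (t:ℂ)/(1+(t:ℂ)^2)‖
      ≤ (2*(1+(1+|L|)^2)) / (1 + t^2) := by
  set z : ℂ := (L:ℂ) + ε*Complex.I with hzdef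
  have hzim : z.im = ε := by simp [hzdef]
  have hzim' : z.im ≠ 0 := by rw [hzim]; exact hε.ne'
  have hzre : z.re = L := by simp [hzdef]
  have h1 : ((t:ℂ) - z) ≠ 0 := herg_ne1 t z hzim'
  have h2 := herg_ne2 t
  rw [herg_eq t z hzim', norm_div, norm_mul]
  have habs2 : ‖1 + (t:ℂ)^2‖ = 1 + t^2 := by
    have : (1 + (t:ℂ)^2) = ((1 + t^2 : ℝ) : ℂ) := by push_cast; ring
    rw [this, Complex.norm_real, Real.norm_of_nonneg (by positivity)]
  rw [habs2]
  have hc : ‖(t:ℂ) - z‖ > 0 := by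
    exact norm_pos_iff.2 h1
  have hcre : ((t:ℂ) - z).re = t - L := by simp [hzdef]
  have hcim : ((t:ℂ) - z).im = -ε := by simp [hzdef]
  -- abs c ≥ (|t-L| + ε)/2
  have hlow : (|t - L| + ε)/2 ≤ ‖(t:ℂ) - z‖ := by
    have h3 := Complex.abs_re_le_norm ((t:ℂ) - z)
    have h4 := Complex.abs_im_le_norm ((t:ℂ) - z)
    rw [hcre] at h3
    rw [hcim] at h4
    rw [abs_neg, abs_of_pos hε] at h4
    linarith
  -- abs (1 + t z) ≤ 1 + |t|(|L|+1)
  have hup : ‖1 + (t:ℂ)*z‖ ≤ 1 + |t| * (|L| + 1) := by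
    calc ‖1 + (t:ℂ)*z‖ ≤ ‖(1:ℂ)‖ + ‖(t:ℂ)*z‖ :=
          norm_add_le _ _
    _ = 1 + |t| * ‖z‖ := by simp [norm_mul]
    _ ≤ 1 + |t| * (|L| + 1) := by
        gcongr
        calc ‖z‖ ≤ ‖(L:ℂ)‖ + ‖(ε:ℂ)*Complex.I‖ :=
              norm_add_le _ _
        _ = |L| + |ε| := by simp [norm_mul]
        _ ≤ |L| + 1 := by rw [abs_of_pos hε]; linarith
  -- main inequality
  rw [mul_div_assoc']
  rw [div_le_div_iff₀ (by positivity) (by positivity)]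
  calc ε * ‖1 + (t:ℂ)*z‖ * ((1+t^2))
      ≤ ε * (1 + |t| * (|L| + 1)) * (1+t^2) := by gcongr
    _ ≤ (2*(1+(1+|L|)^2)) * ((|t - L| + ε)/2) * (1+t^2) := by
        have hb : (0:ℝ) ≤ |L| := abs_nonneg L
        have ha : (0:ℝ) ≤ |t - L| := abs_nonneg (t - L)
        have hm : (0:ℝ) ≤ |t| := abs_nonneg t
        have ht : |t| ≤ |t - L| + |L| := by
          have h := abs_sub t L
          calc |t| = |(t - L) + L| := by ring_nf
          _ ≤ |t - L| + |L| := abs_add_le _ _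
        have key : ε * (1 + |t| * (|L| + 1)) ≤ (1+(1+|L|)^2) * (|t - L| + ε) := by
          set a := |t - L|; set b := |L|; set m := |t|
          have e0 : m*(b+1) ≤ (a+b)*(b+1) := by nlinarith
          have e1 : ε*(m*(b+1)) ≤ ε*((a+b)*(b+1)) :=
            mul_le_mul_of_nonneg_left e0 hε.le
          have e2 : ε*(a*(b+1)) ≤ a*(b+1) := by
            nlinarith [mul_nonneg (sub_nonneg.2 hε1) (mul_nonneg ha (by linarith : (0:ℝ) ≤ b+1))]
          nlinarith [mul_nonneg ha hb, mul_nonneg (mul_nonneg ha hb) hb,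
            mul_nonneg hε.le hb]
        nlinarith [sq_nonneg t, key]
    _ ≤ (2*(1+(1+|L|)^2)) * ‖(t:ℂ) - z‖ * (1+t^2) := by
        have h0 : (0:ℝ) < 2*(1+(1+|L|)^2) := by positivity
        have := mul_le_mul_of_nonneg_left hlow h0.le
        nlinarith [sq_nonneg t, mul_le_mul_of_nonneg_right this (by positivity : (0:ℝ) ≤ 1+t^2)]
    _ = (2*(1+(1+|L|)^2)) * (‖(t:ℂ) - z‖ * (1+t^2)) := mul_assoc _ _ _

lemma herg_summable (u τ : ℕ → ℝ) (hu : ∀ n, 0 ≤ u n)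
    (h : Summable fun n => u n / (1 + (τ n)^2)) (L ε : ℝ) (hε : 0 < ε) (hε1 : ε ≤ 1) :
    Summable fun n =>
      (u n:ℂ) * (1/((τ n:ℂ) - ((L:ℂ)+ε*Complex.I)) - (τ n:ℂ)/(1+(τ n:ℂ)^2)) := by
  refine Summable.of_norm_bounded (g := fun n => (2*(1+(1+|L|)^2))/ε * (u n/(1+(τ n)^2)))
    (h.mul_left _) (fun n => ?_)
  ·
    have hb := herg_bound L (τ n) ε hε hε1
    have habs : ‖(u n:ℂ) * (1/((τ n:ℂ) - ((L:ℂ)+ε*Complex.I)) - (τ n:ℂ)/(1+(τ n:ℂ)^2))‖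
        = u n * ‖1/((τ n:ℂ) - ((L:ℂ)+ε*Complex.I)) - (τ n:ℂ)/(1+(τ n:ℂ)^2)‖ := by
      rw [norm_mul, Complex.norm_real, Real.norm_eq_abs, _root_.abs_of_nonneg (hu n)]
    rw [habs]
    show u n * ‖1/((τ n:ℂ) - ((L:ℂ)+ε*Complex.I)) - (τ n:ℂ)/(1+(τ n:ℂ)^2)‖
      ≤ (2*(1+(1+|L|)^2))/ε * (u n/(1+(τ n)^2))
    have hmul := mul_le_mul_of_nonneg_left hb (hu n)
    have heps : (0:ℝ) < ε := hε
    rw [div_mul_eq_mul_div, le_div_iff₀ heps]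
    calc u n * ‖1/((τ n:ℂ) - ((L:ℂ)+ε*Complex.I)) - (τ n:ℂ)/(1+(τ n:ℂ)^2)‖ * ε
        = u n * (ε * ‖1/((τ n:ℂ) - ((L:ℂ)+ε*Complex.I)) - (τ n:ℂ)/(1+(τ n:ℂ)^2)‖) := by
          ring
      _ ≤ u n * ((2*(1+(1+|L|)^2)) / (1 + (τ n)^2)) := hmul
      _ = 2*(1+(1+|L|)^2) * (u n/(1 + (τ n)^2)) := by ring

lemma term_im (u t L ε : ℝ) :
    ((u:ℂ) * (1/((t:ℂ) - ((L:ℂ)+ε*Complex.I)) - (t:ℂ)/(1+(t:ℂ)^2))).im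
      = u * (ε/((t-L)^2+ε^2)) := by
  have h2 : (1 + (t:ℂ)^2) = ((1+t^2:ℝ):ℂ) := by push_cast; ring
  have h3 : (t:ℂ)/((1+t^2:ℝ):ℂ) = ((t/(1+t^2):ℝ):ℂ) := by norm_cast
  rw [h2, h3, one_div]
  simp only [Complex.mul_im, Complex.sub_im, Complex.ofReal_im, Complex.ofReal_re,
    Complex.inv_im, Complex.sub_re, Complex.add_re, Complex.add_im, Complex.mul_re,
    Complex.mul_im, Complex.I_re, Complex.I_im, Complex.normSq_apply]
  ring_nf

lemma term_re (u t L ε : ℝ) :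
    ((u:ℂ) * (1/((t:ℂ) - ((L:ℂ)+ε*Complex.I)) - (t:ℂ)/(1+(t:ℂ)^2))).re
      = u * ((t-L)/((t-L)^2+ε^2) - t/(1+t^2)) := by
  have h2 : (1 + (t:ℂ)^2) = ((1+t^2:ℝ):ℂ) := by push_cast; ring
  have h3 : (t:ℂ)/((1+t^2:ℝ):ℂ) = ((t/(1+t^2):ℝ):ℂ) := by norm_cast
  rw [h2, h3, one_div]
  simp only [Complex.mul_im, Complex.sub_im, Complex.ofReal_im, Complex.ofReal_re,
    Complex.inv_im, Complex.inv_re, Complex.sub_re, Complex.add_re, Complex.add_im,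
    Complex.mul_re, Complex.mul_im, Complex.I_re, Complex.I_im, Complex.normSq_apply]
  ring_nf


lemma key4 (L t : ℝ) : |1+t*L| * |t-L| ≤ 2*(1+|L|)^2 * (1+t^2+(t-L)^2) := by
  have hm : (0:ℝ) ≤ |t| := abs_nonneg t
  have hb : (0:ℝ) ≤ |L| := abs_nonneg L
  have h1 : |1+t*L| ≤ 1 + |t| * |L| := by
    calc |1+t*L| ≤ |(1:ℝ)| + |t*L| := abs_add_le _ _
    _ = 1 + |t| * |L| := by rw [abs_one, abs_mul]
  have h2 : |t-L| ≤ |t| + |L| := abs_sub _ _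
  have h3 : |1+t*L| * |t-L| ≤ (1 + |t| * |L|) * (|t| + |L|) := by
    apply mul_le_mul h1 h2 (abs_nonneg _) (by positivity)
  have h4 : (1 + |t| * |L|) * (|t| + |L|) ≤ 2*(1+|L|)^2 * (1+t^2) := by
    have ht2 : |t|^2 = t^2 := sq_abs t
    nlinarith [sq_nonneg (|t| - 1), mul_nonneg hm hb, mul_nonneg (mul_nonneg hm hm) hb,
      mul_nonneg (mul_nonneg hm hb) hb, sq_nonneg (|t| * |L| - 1)]
  calc |1+t*L| * |t-L| ≤ 2*(1+|L|)^2 * (1+t^2) := le_trans h3 h4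
  _ ≤ 2*(1+|L|)^2 * (1+t^2+(t-L)^2) := by nlinarith [sq_nonneg (t-L), sq_nonneg (1+|L|)]

lemma targ_bound (L t : ℝ) (hd : t ≠ L) :
    |1/(t-L) - t/(1+t^2)| ≤ 2*(1+|L|)^2 * (1/(t-L)^2 + 1/(1+t^2)) := by
  have hdne : t - L ≠ 0 := sub_ne_zero.2 hd
  have htpos : (0:ℝ) < 1 + t^2 := by positivity
  have hid : 1/(t-L) - t/(1+t^2) = (1+t*L)/((t-L)*(1+t^2)) := by
    field_simp; ring
  set a := |t - L| with hadef
  have ha : 0 < a := abs_pos.2 hdne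
  have ha2 : a^2 = (t-L)^2 := sq_abs _
  rw [hid, abs_div, abs_mul]
  rw [_root_.abs_of_pos htpos]
  rw [div_le_iff₀ (by positivity)]
  have hrw : 2*(1+|L|)^2 * (1/(t-L)^2 + 1/(1+t^2)) * (a * (1+t^2))
      = 2*(1+|L|)^2 * (1+t^2+(t-L)^2) / a := by
    rw [← ha2]; field_simp
  rw [hrw, le_div_iff₀ ha]
  exact key4 L t


lemma diff_bound (d ε : ℝ) (hd : d ≠ 0) (hε : 0 < ε) :
    |d/(d^2+ε^2) - 1/d| ≤ ε/(2*d^2) := by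
  have hd2 : (0:ℝ) < d^2 := by positivity
  have hde : (0:ℝ) < d^2 + ε^2 := by positivity
  have hid : d/(d^2+ε^2) - 1/d = -(ε^2/(d*(d^2+ε^2))) := by
    field_simp
    ring
  rw [hid, abs_neg, abs_div]
  have habs1 : |ε^2| = ε^2 := abs_of_pos (by positivity)
  have habs2 : |d*(d^2+ε^2)| = |d| * (d^2+ε^2) := by
    rw [abs_mul, abs_of_pos hde]
  rw [habs1, habs2]
  rw [div_le_div_iff₀ (by positivity) (by positivity)]
  have hamgm : 2 * |d| * ε ≤ d^2 + ε^2 := by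
    nlinarith [sq_nonneg (|d| - ε), _root_.sq_abs d]
  have h1 : ε^2 * (2*d^2) = (ε * |d|) * (2 * |d| * ε) := by
    nlinarith [_root_.sq_abs d]
  rw [h1]
  calc (ε * |d|) * (2 * |d| * ε) ≤ (ε * |d|) * (d^2+ε^2) := by
        apply mul_le_mul_of_nonneg_left hamgm
        positivity
    _ = ε * (|d| * (d^2+ε^2)) := by ring

/-- If `1/(α - φ(z)) = b + ∑ w j (1/(λ j - z) - λ j/(1+λ j²))` on the upper half-plane,
then each `λ j` lies in `(Γ,v)*`, satisfies `φ(λ j) = α`, and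
`w j = (∑ v n/(λ j - γ n)²)⁻¹`. -/
theorem stmt_11 (γ : ℕ → ℝ) (hγ : Function.Injective γ) (v : ℕ → ℝ) (hv : ∀ n, 0 < v n)
    (hadm : Summable (fun n => v n / (1 + (γ n) ^ 2))) (α : ℝ)
    (l : ℕ → ℝ) (hl : Function.Injective l) (w : ℕ → ℝ) (hw : ∀ j, 0 < w j)
    (hadm' : Summable (fun j => w j / (1 + (l j) ^ 2))) (b : ℝ)
    (heq : ∀ z : ℂ, 0 < z.im →
      ((α : ℂ) - ∑' n, (v n : ℂ) * (1 / ((γ n : ℂ) - z) - (γ n : ℂ) / (1 + (γ n : ℂ) ^ 2)))⁻¹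
        = (b : ℂ) + ∑' j, (w j : ℂ) * (1 / ((l j : ℂ) - z) - (l j : ℂ) / (1 + (l j : ℂ) ^ 2))) :
    ∀ j, (∀ n, l j ≠ γ n) ∧ Summable (fun n => v n / (l j - γ n) ^ 2) ∧
      (∑' n, v n * (1 / (γ n - l j) - γ n / (1 + (γ n) ^ 2)) = α) ∧
      w j = (∑' n, v n / (l j - γ n) ^ 2)⁻¹ := by
  intro j
  set L : ℝ := l j with hLdef
  set 𝓕 : Filter ℝ := nhdsWithin 0 (Set.Ioi 0) with hFdef
  -- basic filter facts
  have hmem : ∀ᶠ ε in 𝓕, 0 < ε ∧ ε ≤ 1 := by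
    have h1 : ∀ᶠ ε in 𝓕, ε ∈ Set.Ioi (0:ℝ) := eventually_mem_nhdsWithin
    have h2 : ∀ᶠ ε in 𝓕, ε < 1 := by
      apply eventually_nhdsWithin_of_eventually_nhds
      exact Filter.Tendsto.eventually_lt_const one_pos tendsto_id
    filter_upwards [h1, h2] with ε hε hε1
    exact ⟨hε, hε1.le⟩
  have htendε : Tendsto (fun ε : ℝ => ε) 𝓕 (𝓝 0) :=
    tendsto_id.mono_left nhdsWithin_le_nhds
  have htendεC : Tendsto (fun ε : ℝ => (ε:ℂ)) 𝓕 (𝓝 0) := by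
    have := (Complex.continuous_ofReal.tendsto 0).comp htendε
    simpa [Function.comp_def] using this
  -- the two pole families
  set f : ℝ → ℝ → ℂ := fun t ε => 1/((t:ℂ) - ((L:ℂ)+ε*Complex.I)) - (t:ℂ)/(1+(t:ℂ)^2)
    with hfdef
  set φ : ℝ → ℂ := fun ε => ∑' n, (v n:ℂ) * f (γ n) ε with hφdef
  set ψ : ℝ → ℂ := fun ε => ∑' k, (w k:ℂ) * f (l k) ε with hψdef
  have hsumγ : ∀ ε : ℝ, 0 < ε → ε ≤ 1 → Summable (fun n => (v n:ℂ) * f (γ n) ε) :=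
    fun ε h1 h2 => herg_summable v γ (fun n => (hv n).le) hadm L ε h1 h2
  have hsuml : ∀ ε : ℝ, 0 < ε → ε ≤ 1 → Summable (fun k => (w k:ℂ) * f (l k) ε) :=
    fun ε h1 h2 => herg_summable w l (fun k => (hw k).le) hadm' L ε h1 h2
  have heq' : ∀ ε : ℝ, 0 < ε → ((α:ℂ) - φ ε)⁻¹ = (b:ℂ) + ψ ε := by
    intro ε hε
    exact heq ((L:ℂ) + ε*Complex.I) (by simp [hε])
  -- Step A pieces
  have hT1 : Tendsto (fun ε : ℝ => (-(ε:ℂ)*Complex.I) * (b:ℂ)) 𝓕 (𝓝 0) := by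
    have := (htendεC.neg.mul_const Complex.I).mul_const (b:ℂ)
    simpa using this
  have hT2 : Tendsto (fun ε : ℝ => (-(ε:ℂ)*Complex.I) * ((w j:ℂ) * f L ε)) 𝓕
      (𝓝 (w j:ℂ)) := by
    have hcont : Tendsto
        (fun ε : ℝ => (w j:ℂ) + (w j:ℂ)*((ε:ℂ)*Complex.I*(L:ℂ)/(1+(L:ℂ)^2))) 𝓕
        (𝓝 ((w j:ℂ) + (w j:ℂ)*((0:ℂ)*Complex.I*(L:ℂ)/(1+(L:ℂ)^2)))) := by
      exact Tendsto.const_add _ (Tendsto.const_mul _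
        (((htendεC.mul_const Complex.I).mul_const (L:ℂ)).div_const _))
    simp only [zero_mul, zero_div, mul_zero, add_zero] at hcont
    apply hcont.congr'
    filter_upwards [hmem] with ε ⟨hε, _⟩
    have hne : (-(ε:ℂ)*Complex.I) ≠ 0 := by
      simp [Complex.ext_iff, hε.ne']
    have hL2 := herg_ne2 L
    have hLL : (L:ℂ) - ((L:ℂ)+ε*Complex.I) = -(ε:ℂ)*Complex.I := by ring
    simp only [hfdef, hLL]
    have hinv : (-(ε:ℂ)*Complex.I) * (1/(-(ε:ℂ)*Complex.I)) = 1 := by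
      rw [one_div, mul_inv_cancel₀ hne]
    calc (w j:ℂ) + (w j:ℂ)*((ε:ℂ)*Complex.I*(L:ℂ)/(1+(L:ℂ)^2))
        = (w j:ℂ) * 1 - (-(ε:ℂ)*Complex.I)*((w j:ℂ)*((L:ℂ)/(1+(L:ℂ)^2))) := by ring
      _ = (w j:ℂ) * ((-(ε:ℂ)*Complex.I) * (1/(-(ε:ℂ)*Complex.I)))
            - (-(ε:ℂ)*Complex.I)*((w j:ℂ)*((L:ℂ)/(1+(L:ℂ)^2))) := by rw [hinv]
      _ = (-(ε:ℂ)*Complex.I) * ((w j:ℂ) * (1/(-(ε:ℂ)*Complex.I) - (L:ℂ)/(1+(L:ℂ)^2))) := by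
          ring
  have hT3 : Tendsto (fun ε : ℝ =>
      ∑' k, ((-(ε:ℂ)*Complex.I) * (if k = j then 0 else (w k:ℂ) * f (l k) ε))) 𝓕
      (𝓝 0) := by
    have h0 : (𝓝 (0:ℂ)) = 𝓝 (∑' (_ : ℕ), (0:ℂ)) := by simp
    rw [h0]
    apply tendsto_tsum_of_dominated_convergence
      (bound := fun k => 2*(1+(1+|L|)^2) * (w k/(1+(l k)^2)))
    · exact hadm'.mul_left _
    · intro k
      by_cases hk : k = j
      · simp [hk]
      · simp only [if_neg hk]
        have hlne : (l k : ℂ) - (L:ℂ) ≠ 0 := by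
          rw [sub_ne_zero]
          exact_mod_cast fun h => hk (hl (by exact_mod_cast h))
        have hden : Tendsto (fun ε : ℝ => (l k:ℂ) - ((L:ℂ)+(ε:ℂ)*Complex.I)) 𝓕
            (𝓝 ((l k:ℂ) - (L:ℂ))) := by
          have := tendsto_const_nhds (x := (l k:ℂ)) (f := 𝓕) |>.sub
            (((htendεC.mul_const Complex.I).const_add (L:ℂ)))
          simpa using this
        have hf : Tendsto (fun ε => f (l k) ε) 𝓕
            (𝓝 (1/((l k:ℂ)-(L:ℂ)) - (l k:ℂ)/(1+(l k:ℂ)^2))) := by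
          simp only [hfdef]
          exact Tendsto.sub (tendsto_const_nhds.div hden hlne) tendsto_const_nhds
        have := (htendεC.neg.mul_const Complex.I).mul (hf.const_mul ((w k:ℂ)))
        simpa using this
    · filter_upwards [hmem] with ε ⟨hε, hε1⟩
      intro k
      by_cases hk : k = j
      · simp only [if_pos hk, mul_zero, norm_zero]
        have := hw k
        positivity
      · simp only [if_neg hk]
        have hb := herg_bound L (l k) ε hε hε1
        have hnorm : ‖(-(ε:ℂ)*Complex.I) * ((w k:ℂ) * f (l k) ε)‖
            = ε * (w k * ‖f (l k) ε‖) := by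
          rw [norm_mul, norm_mul, norm_mul, norm_neg, Complex.norm_real,
            Complex.norm_I, Complex.norm_real]
          rw [Real.norm_eq_abs, Real.norm_eq_abs, _root_.abs_of_pos hε,
            _root_.abs_of_pos (hw k)]
          rw [mul_one]
        rw [hnorm]
        calc ε * (w k * ‖f (l k) ε‖)
            = w k * (ε * ‖f (l k) ε‖) := by ring
          _ ≤ w k * ((2*(1+(1+|L|)^2)) / (1 + (l k)^2)) :=
              mul_le_mul_of_nonneg_left hb (hw k).le
          _ = 2*(1+(1+|L|)^2) * (w k/(1+(l k)^2)) := by ring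
  have hstepA : Tendsto (fun ε : ℝ => (-(ε:ℂ)*Complex.I) * ((b:ℂ) + ψ ε)) 𝓕
      (𝓝 (w j:ℂ)) := by
    have hsum3 := (hT1.add hT2).add hT3
    simp only [zero_add, add_zero] at hsum3
    apply hsum3.congr'
    filter_upwards [hmem] with ε ⟨hε, hε1⟩
    have hs := hsuml ε hε hε1
    simp only [hψdef]
    rw [Summable.tsum_eq_add_tsum_ite hs j, tsum_mul_left]
    ring
  have hG : Tendsto (fun ε : ℝ => (-(ε:ℂ)*Complex.I) * (((α:ℂ) - φ ε)⁻¹)) 𝓕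
      (𝓝 (w j:ℂ)) := by
    apply hstepA.congr'
    filter_upwards [hmem] with ε ⟨hε, _⟩
    rw [← heq' ε hε]
  have hwne : (w j : ℂ) ≠ 0 := by exact_mod_cast (hw j).ne'
  have hGinv := hG.inv₀ hwne
  have hGne : ∀ᶠ ε : ℝ in 𝓕, (-(ε:ℂ)*Complex.I) * (((α:ℂ) - φ ε)⁻¹) ≠ 0 :=
    hG.eventually_ne hwne
  have hH : Tendsto (fun ε : ℝ => Complex.I * ((α:ℂ) - φ ε) * ((ε:ℂ))⁻¹) 𝓕
      (𝓝 ((w j:ℂ))⁻¹) := by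
    apply hGinv.congr'
    filter_upwards [hmem, hGne] with ε ⟨hε, _⟩ hne0
    have hεC : (ε:ℂ) ≠ 0 := ofReal_ne_zero.2 hε.ne'
    have hmI : (-(ε:ℂ)*Complex.I) ≠ 0 := by
      simp [Complex.ext_iff, hε.ne']
    have hXne : ((α:ℂ) - φ ε) ≠ 0 := by
      intro h
      apply hne0
      rw [h, inv_zero, mul_zero]
    rw [mul_inv, inv_inv]
    have hinv2 : (-(ε:ℂ)*Complex.I)⁻¹ = Complex.I * ((ε:ℂ))⁻¹ := by
      apply inv_eq_of_mul_eq_one_right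
      calc (-(ε:ℂ)*Complex.I) * (Complex.I * ((ε:ℂ))⁻¹)
          = -(Complex.I*Complex.I) * ((ε:ℂ) * ((ε:ℂ))⁻¹) := by ring
        _ = 1 := by rw [Complex.I_mul_I, mul_inv_cancel₀ hεC]; ring
    rw [hinv2]
    ring
  -- real and imaginary limits
  have hre : Tendsto (fun ε : ℝ => (φ ε).im * ε⁻¹) 𝓕 (𝓝 ((w j)⁻¹)) := by
    have := (Complex.continuous_re.tendsto _).comp hH
    simpa [Function.comp_def] using this
  have him : Tendsto (fun ε : ℝ => (α - (φ ε).re) * ε⁻¹) 𝓕 (𝓝 0) := by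
    have := (Complex.continuous_im.tendsto _).comp hH
    simpa [Function.comp_def] using this
  -- summability of the imaginary parts
  have hsumim : ∀ ε : ℝ, 0 < ε → ε ≤ 1 →
      Summable (fun n => v n / ((γ n - L)^2 + ε^2)) := by
    intro ε hε hε1
    obtain ⟨x, hx⟩ := hsumγ ε hε hε1
    have him2 := (Complex.hasSum_im hx).summable
    have heqf : (fun n => ((v n:ℂ) * f (γ n) ε).im)
        = fun n => v n * (ε/((γ n - L)^2+ε^2)) := by
      funext n
      simp only [hfdef]
      exact term_im (v n) (γ n) L ε
    rw [heqf] at him2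
    have := him2.mul_right ε⁻¹
    apply this.congr
    intro n
    field_simp
  have hφim : ∀ ε : ℝ, 0 < ε → ε ≤ 1 →
      (φ ε).im = ε * ∑' n, v n / ((γ n - L)^2 + ε^2) := by
    intro ε hε hε1
    simp only [hφdef]
    rw [Complex.im_tsum (hsumγ ε hε hε1)]
    rw [show (fun n => ((v n:ℂ) * f (γ n) ε).im)
        = fun n => ε * (v n / ((γ n - L)^2+ε^2)) from ?_]
    · exact tsum_mul_left
    · funext n
      simp only [hfdef]
      rw [term_im (v n) (γ n) L ε]
      ring
  have hSten : Tendsto (fun ε : ℝ => ∑' n, v n / ((γ n - L)^2 + ε^2)) 𝓕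
      (𝓝 ((w j)⁻¹)) := by
    apply hre.congr'
    filter_upwards [hmem] with ε ⟨hε, hε1⟩
    rw [hφim ε hε hε1]
    field_simp
  -- conclusion 1 : no coincidence of poles
  have hne1 : ∀ n, L ≠ γ n := by
    intro n hLn
    have hterm : ∀ᶠ ε : ℝ in 𝓕, v n / ε^2 ≤ ∑' m, v m / ((γ m - L)^2 + ε^2) := by
      filter_upwards [hmem] with ε ⟨hε, hε1⟩
      have hle := Summable.le_tsum (hsumim ε hε hε1) n (fun m _ => by
        have := hv m
        positivity)
      have hzero : γ n - L = 0 := by rw [← hLn]; ring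
      rw [hzero] at hle
      simpa using hle
    have hsq : Tendsto (fun ε : ℝ => ε^2) 𝓕 (𝓝 0) := by
      have := htendε.pow 2
      simpa using this
    have hcpos : (0:ℝ) < v n / ((w j)⁻¹ + 1) := by
      have := hv n
      have := hw j
      positivity
    have hbig : ∀ᶠ ε : ℝ in 𝓕, (w j)⁻¹ + 1 < v n / ε^2 := by
      filter_upwards [hsq.eventually_lt_const hcpos, hmem] with ε h2 ⟨hε, _⟩
      have hε2 : (0:ℝ) < ε^2 := by positivity
      rw [lt_div_iff₀ hε2]
      rw [lt_div_iff₀ (by have := hw j; positivity)] at h2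
      nlinarith [hv n, hw j]
    have hsmall : ∀ᶠ ε : ℝ in 𝓕, (∑' m, v m / ((γ m - L)^2 + ε^2)) < (w j)⁻¹ + 1 :=
      hSten.eventually_lt_const (by linarith)
    obtain ⟨ε, h1, h2, h3⟩ := (hterm.and (hbig.and hsmall)).exists
    linarith
  have hdne : ∀ n, γ n - L ≠ 0 := fun n => sub_ne_zero.2 (fun h => hne1 n h.symm)
  have hdpos : ∀ n, (0:ℝ) < (γ n - L)^2 := fun n => by
    have := hdne n
    positivity
  -- conclusion 2 : summability
  have hA2 : ∀ s : Finset ℕ, ∑ n ∈ s, v n / (γ n - L)^2 ≤ (w j)⁻¹ := by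
    intro s
    have hfin : Tendsto (fun ε : ℝ => ∑ n ∈ s, v n / ((γ n - L)^2 + ε^2)) 𝓕
        (𝓝 (∑ n ∈ s, v n / (γ n - L)^2)) := by
      apply tendsto_finset_sum
      intro i _
      have hlim : Tendsto (fun ε : ℝ => (γ i - L)^2 + ε^2) 𝓕 (𝓝 ((γ i - L)^2)) := by
        have := tendsto_const_nhds (x := (γ i - L)^2) (f := 𝓕) |>.add
          (by simpa using htendε.pow 2 : Tendsto (fun ε : ℝ => ε^2) 𝓕 (𝓝 0))
        simpa using this
      exact Tendsto.div tendsto_const_nhds hlim (hdpos i).ne'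
    refine le_of_tendsto_of_tendsto hfin hSten ?_
    filter_upwards [hmem] with ε ⟨hε, hε1⟩
    exact Summable.sum_le_tsum s (fun m _ => by have := hv m; positivity) (hsumim ε hε hε1)
  have hsumm : Summable (fun n => v n / (γ n - L)^2) :=
    summable_of_sum_le (fun n => by have := hv n; positivity) hA2
  -- conclusion 3 : value of the sum
  have hAle : ∑' n, v n / (γ n - L)^2 ≤ (w j)⁻¹ := Summable.tsum_le_of_sum_le hsumm hA2
  have hAge : (w j)⁻¹ ≤ ∑' n, v n / (γ n - L)^2 := by
    apply le_of_tendsto hSten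
    filter_upwards [hmem] with ε ⟨hε, hε1⟩
    apply Summable.tsum_le_tsum _ (hsumim ε hε hε1) hsumm
    intro m
    apply div_le_div_of_nonneg_left (hv m).le (hdpos m)
    nlinarith [sq_nonneg ε]
  have hAeq : ∑' n, v n / (γ n - L)^2 = (w j)⁻¹ := le_antisymm hAle hAge
  -- conclusion 4 : the real part
  have hsumT : Summable (fun n => v n * (1/(γ n - L) - γ n/(1+(γ n)^2))) := by
    apply Summable.of_norm_bounded
      (g := fun n => 2*(1+|L|)^2 * (v n/(γ n - L)^2 + v n/(1+(γ n)^2)))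
      ((hsumm.add hadm).mul_left _)
    intro n
    have htb := targ_bound L (γ n) (fun h => hne1 n h.symm)
    rw [Real.norm_eq_abs, abs_mul, _root_.abs_of_pos (hv n)]
    calc v n * |1/(γ n - L) - γ n/(1+(γ n)^2)|
        ≤ v n * (2*(1+|L|)^2 * (1/(γ n - L)^2 + 1/(1+(γ n)^2))) :=
          mul_le_mul_of_nonneg_left htb (hv n).le
      _ = 2*(1+|L|)^2 * (v n/(γ n - L)^2 + v n/(1+(γ n)^2)) := by ring
  have hsumre : ∀ ε : ℝ, 0 < ε → ε ≤ 1 → Summable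
      (fun n => v n * ((γ n - L)/((γ n - L)^2+ε^2) - γ n/(1+(γ n)^2))) := by
    intro ε hε hε1
    obtain ⟨x, hx⟩ := hsumγ ε hε hε1
    apply ((Complex.hasSum_re hx).summable).congr
    intro n
    simp only [hfdef]
    exact term_re (v n) (γ n) L ε
  have hφre : ∀ ε : ℝ, 0 < ε → ε ≤ 1 →
      (φ ε).re = ∑' n, v n * ((γ n - L)/((γ n - L)^2+ε^2) - γ n/(1+(γ n)^2)) := by
    intro ε hε hε1
    simp only [hφdef]
    rw [Complex.re_tsum (hsumγ ε hε hε1)]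
    apply tsum_congr
    intro n
    simp only [hfdef]
    exact term_re (v n) (γ n) L ε
  have hreT : Tendsto (fun ε : ℝ => (φ ε).re) 𝓕
      (𝓝 (∑' n, v n * (1/(γ n - L) - γ n/(1+(γ n)^2)))) := by
    have h0 : Tendsto (fun ε : ℝ =>
        (φ ε).re - ∑' n, v n * (1/(γ n - L) - γ n/(1+(γ n)^2))) 𝓕 (𝓝 0) := by
      have hgt : Tendsto (fun ε : ℝ => ε/2 * ∑' n, v n/(γ n - L)^2) 𝓕
          (𝓝 (0/2 * ∑' n, v n/(γ n - L)^2)) := (htendε.div_const 2).mul_const _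
      rw [show (0:ℝ)/2 * ∑' n, v n/(γ n - L)^2 = 0 from by simp] at hgt
      apply squeeze_zero_norm' ?_ hgt
      · filter_upwards [hmem] with ε ⟨hε, hε1⟩
        rw [Real.norm_eq_abs, hφre ε hε hε1, ← Summable.tsum_sub (hsumre ε hε hε1) hsumT]
        have hterm : ∀ n, v n * ((γ n - L)/((γ n - L)^2+ε^2) - γ n/(1+(γ n)^2))
            - v n * (1/(γ n - L) - γ n/(1+(γ n)^2))
            = v n * ((γ n - L)/((γ n - L)^2+ε^2) - 1/(γ n - L)) := fun n => by ring
        have hbnd : ∀ n, |v n * ((γ n - L)/((γ n - L)^2+ε^2) - 1/(γ n - L))|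
            ≤ ε/2 * (v n/(γ n - L)^2) := by
          intro n
          rw [abs_mul, _root_.abs_of_pos (hv n)]
          have hdb := diff_bound (γ n - L) ε (hdne n) hε
          calc v n * |(γ n - L)/((γ n - L)^2+ε^2) - 1/(γ n - L)|
              ≤ v n * (ε/(2*(γ n - L)^2)) := mul_le_mul_of_nonneg_left hdb (hv n).le
            _ = ε/2 * (v n/(γ n - L)^2) := by
                have := hdpos n
                field_simp
        have hsumabs : Summable
            (fun n => ‖v n * ((γ n - L)/((γ n - L)^2+ε^2) - 1/(γ n - L))‖) :=
          Summable.of_nonneg_of_le (fun n => norm_nonneg _)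
            (fun n => by rw [Real.norm_eq_abs]; exact hbnd n) (hsumm.mul_left (ε/2))
        calc |∑' n, (v n * ((γ n - L)/((γ n - L)^2+ε^2) - γ n/(1+(γ n)^2))
                - v n * (1/(γ n - L) - γ n/(1+(γ n)^2)))|
            = |∑' n, v n * ((γ n - L)/((γ n - L)^2+ε^2) - 1/(γ n - L))| := by
              rw [tsum_congr hterm]
          _ ≤ ∑' n, ‖v n * ((γ n - L)/((γ n - L)^2+ε^2) - 1/(γ n - L))‖ := by
              rw [← Real.norm_eq_abs]
              exact norm_tsum_le_tsum_norm hsumabs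
          _ ≤ ∑' n, ε/2 * (v n/(γ n - L)^2) :=
              Summable.tsum_le_tsum (fun n => by rw [Real.norm_eq_abs]; exact hbnd n)
                hsumabs (hsumm.mul_left _)
          _ = ε/2 * ∑' n, v n/(γ n - L)^2 := tsum_mul_left
    have := h0.add_const (∑' n, v n * (1/(γ n - L) - γ n/(1+(γ n)^2)))
    simpa using this
  have hreα : Tendsto (fun ε : ℝ => (φ ε).re) 𝓕 (𝓝 α) := by
    have h1 : Tendsto (fun ε : ℝ => (α - (φ ε).re) * ε⁻¹ * ε) 𝓕 (𝓝 0) := by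
      have := him.mul htendε
      simpa using this
    have h2 : Tendsto (fun ε : ℝ => α - (φ ε).re) 𝓕 (𝓝 0) := by
      apply h1.congr'
      filter_upwards [hmem] with ε ⟨hε, _⟩
      field_simp
    have := (tendsto_const_nhds (x := α) (f := 𝓕)).sub h2
    simpa using this
  haveI : 𝓕.NeBot := by rw [hFdef]; infer_instance
  have hTα : (∑' n, v n * (1/(γ n - L) - γ n/(1+(γ n)^2))) = α :=
    tendsto_nhds_unique hreT hreα
  -- assemble
  have hsq : ∀ n, (L - γ n)^2 = (γ n - L)^2 := fun n => by ring
  refine ⟨hne1, ?_, ?_, ?_⟩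
  · apply hsumm.congr
    intro n
    rw [hsq n]
  · exact hTα
  · rw [show (∑' n, v n / (L - γ n)^2) = ∑' n, v n / (γ n - L)^2 from
      tsum_congr (fun n => by rw [hsq n])]
    rw [hAeq, inv_inv]
end

section
/- Let $(\gamma_n)$ be distinct real numbers, $(v_n)$ positive with $\sum v_n/(1+\gamma_n^2) < \infty$, $\varphi$ the associated Herglotz function, and $\alpha \in \mathbb{R}$. If $(\alpha - \varphi(z))^{-1}$ is NOT a purely atomic Herglotz function (i.e., in its representation either the linear coefficient $c > 0$ or the spectral measure has a nonzero continuous part), then the discrete Hilbert transform $H_v(\Gamma, \Lambda(\alpha)) : \ell^2_v \to \ell^2_{w(\alpha)}$ is not unitary. -/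
open MeasureTheory Complex

lemma normSq_sub_lower (z : ℂ) (hz : z.im ≠ 0) :
    ∃ c > 0, ∀ t : ℝ, c * (1 + t^2) ≤ Complex.normSq ((t:ℂ) - z) := by
  refine ⟨min (z.im^2) (1/2) / (1 + 2 * z.re^2), by positivity, fun t => ?_⟩
  have h1 : Complex.normSq ((t:ℂ) - z) = (t - z.re)^2 + z.im^2 := by
    simp [Complex.normSq_apply, Complex.sub_re, Complex.sub_im]; ring
  rw [h1]
  rw [div_mul_eq_mul_div, div_le_iff₀ (by positivity)]
  have h2 : min (z.im^2) (1/2) ≤ z.im^2 := min_le_left _ _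
  have h3 : min (z.im^2) (1/2) ≤ 1/2 := min_le_right _ _
  have h4 : (0:ℝ) ≤ min (z.im^2) (1/2) := le_min (by positivity) (by norm_num)
  nlinarith [sq_nonneg (t - 2*z.re), sq_nonneg (t - z.re), sq_nonneg z.re,
    mul_le_mul_of_nonneg_right h3 (sq_nonneg (t - z.re)),
    mul_le_mul_of_nonneg_right h2 (sq_nonneg z.re)]

lemma kernel_eq (t : ℝ) (z : ℂ) (h : (t:ℂ) ≠ z) :
    1/((t:ℂ)-z) - t/(1+(t:ℂ)^2) = (1+t*z)/((((t:ℂ)-z))*(1+(t:ℂ)^2)) := by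
  have h1 : ((t:ℂ)-z) ≠ 0 := sub_ne_zero.mpr h
  have h2 : (1+(t:ℂ)^2) ≠ 0 := by
    have : (1+(t:ℂ)^2) = ((1+t^2 : ℝ) : ℂ) := by push_cast; ring
    rw [this]
    exact_mod_cast (by positivity : (1+t^2:ℝ) ≠ 0)
  field_simp
  ring

lemma partial_frac (t : ℝ) (z w : ℂ) (hz : (t:ℂ) ≠ z) (hw : (t:ℂ) ≠ w) :
    (1/((t:ℂ)-z) - t/(1+(t:ℂ)^2)) - (1/((t:ℂ)-w) - t/(1+(t:ℂ)^2))
      = (z-w)/(((t:ℂ)-z)*((t:ℂ)-w)) := by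
  have h1 : ((t:ℂ)-z) ≠ 0 := sub_ne_zero.mpr hz
  have h2 : ((t:ℂ)-w) ≠ 0 := sub_ne_zero.mpr hw
  field_simp
  ring

lemma kernel_bound (t : ℝ) (z : ℂ) (h : (t:ℂ) ≠ z) :
    ‖1/((t:ℂ)-z) - t/(1+(t:ℂ)^2)‖ ≤
      Real.sqrt (1 + Complex.normSq z) * (1/Complex.normSq ((t:ℂ)-z) + 1/(1+t^2)) / 2 := by
  have h1 : ((t:ℂ)-z) ≠ 0 := sub_ne_zero.mpr h
  rw [kernel_eq t z h]
  have h2c : (1+(t:ℂ)^2) = ((1+t^2 : ℝ) : ℂ) := by push_cast; ring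
  have hpos : (0:ℝ) < 1 + t^2 := by positivity
  set A := ‖(t:ℂ)-z‖ with hAdef
  set B := Real.sqrt (1+t^2) with hBdef
  set S := Real.sqrt (1 + Complex.normSq z) with hSdef
  have hA : 0 < A := norm_pos_iff.mpr h1
  have hB : 0 < B := Real.sqrt_pos.mpr hpos
  have hS : 0 ≤ S := Real.sqrt_nonneg _
  have hA2 : A^2 = Complex.normSq ((t:ℂ)-z) := by
    rw [hAdef, Complex.sq_norm]
  have hB2 : B^2 = 1+t^2 := Real.sq_sqrt hpos.le
  have hnum : ‖1+(t:ℂ)*z‖ ≤ B * S := by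
    have hz2 : Complex.normSq z = ‖z‖^2 := by
      rw [Complex.sq_norm]
    calc ‖1+(t:ℂ)*z‖ ≤ ‖(1:ℂ)‖ + ‖(t:ℂ)*z‖ := norm_add_le _ _
    _ = 1 + |t| * ‖z‖ := by rw [norm_one, norm_mul, Complex.norm_real, Real.norm_eq_abs]
    _ ≤ B * S := by
        rw [hBdef, hSdef, ← Real.sqrt_mul hpos.le]
        rw [Real.le_sqrt (by positivity)
          (mul_nonneg (by positivity) (by nlinarith [Complex.normSq_nonneg z])), hz2]
        nlinarith [sq_nonneg (|t| - ‖z‖), abs_nonneg t, norm_nonneg z, _root_.sq_abs t]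
  rw [norm_div, norm_mul, h2c, Complex.norm_real, Real.norm_eq_abs, abs_of_pos hpos]
  calc ‖1+(t:ℂ)*z‖ / (A * (1+t^2)) ≤ (B*S) / (A * (1+t^2)) :=
        by gcongr
  _ ≤ S * (1/Complex.normSq ((t:ℂ)-z) + 1/(1+t^2)) / 2 := by
        rw [← hA2, ← hB2, div_le_iff₀ (by positivity)]
        have key : 0 ≤ S * (A - B)^2 := mul_nonneg hS (sq_nonneg _)
        have e1 : (0:ℝ) < A^2 := by positivity
        have e2 : (0:ℝ) < B^2 := by positivity
        field_simp
        nlinarith [mul_nonneg key (by positivity : (0:ℝ) ≤ A*B^2)]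

lemma sum_partial_frac {X : Type*} (t : X → ℝ) (p : X → ℝ) (hp : ∀ x, 0 ≤ p x)
    (hb : Summable fun x => p x / (1 + (t x)^2))
    (z w : ℂ) (hz : ∀ x, (t x:ℂ) ≠ z) (hwne : ∀ x, (t x:ℂ) ≠ w)
    (hsz : Summable fun x => p x / Complex.normSq ((t x:ℂ) - z))
    (hsw : Summable fun x => p x / Complex.normSq ((t x:ℂ) - w)) :
    Summable (fun x => (p x:ℂ) * (1/((t x:ℂ)-z) - (t x:ℂ)/(1+(t x:ℂ)^2))) ∧
    Summable (fun x => (p x:ℂ) * (1/((t x:ℂ)-w) - (t x:ℂ)/(1+(t x:ℂ)^2))) ∧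
    Summable (fun x => (p x:ℂ)/(((t x:ℂ)-z)*((t x:ℂ)-w))) ∧
    (∑' x, (p x:ℂ)/(((t x:ℂ)-z)*((t x:ℂ)-w))) * (z - w)
      = ∑' x, (p x:ℂ)*(1/((t x:ℂ)-z) - (t x:ℂ)/(1+(t x:ℂ)^2))
        - ∑' x, (p x:ℂ)*(1/((t x:ℂ)-w) - (t x:ℂ)/(1+(t x:ℂ)^2)) := by
  have hBgen : ∀ (y : ℂ), (∀ x, (t x:ℂ) ≠ y) →
      (Summable fun x => p x / Complex.normSq ((t x:ℂ) - y)) →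
      Summable (fun x => (p x:ℂ) * (1/((t x:ℂ)-y) - (t x:ℂ)/(1+(t x:ℂ)^2))) := by
    intro y hy hsy
    apply Summable.of_norm
    have hg : Summable (fun x => Real.sqrt (1 + Complex.normSq y) *
        (p x / Complex.normSq ((t x:ℂ) - y) + p x / (1 + (t x)^2)) / 2) := by
      exact ((hsy.add hb).mul_left _).div_const 2
    refine Summable.of_nonneg_of_le (fun x => norm_nonneg _) (fun x => ?_) hg
    rw [norm_mul, Complex.norm_real, Real.norm_eq_abs, _root_.abs_of_nonneg (hp x)]
    calc p x * ‖1/((t x:ℂ)-y) - (t x:ℂ)/(1+(t x:ℂ)^2)‖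
        ≤ p x * (Real.sqrt (1 + Complex.normSq y) *
            (1/Complex.normSq ((t x:ℂ)-y) + 1/(1+(t x)^2)) / 2) :=
          mul_le_mul_of_nonneg_left (kernel_bound (t x) y (hy x)) (hp x)
      _ = Real.sqrt (1 + Complex.normSq y) *
            (p x / Complex.normSq ((t x:ℂ) - y) + p x / (1 + (t x)^2)) / 2 := by
          ring
  have hBz := hBgen z hz hsz
  have hBw := hBgen w hwne hsw
  have hprod : Summable (fun x => (p x:ℂ)/(((t x:ℂ)-z)*((t x:ℂ)-w))) := by
    apply Summable.of_norm
    refine Summable.of_nonneg_of_le (fun x => norm_nonneg _) (fun x => ?_)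
      ((hsz.add hsw).div_const 2)
    set a := ‖(t x:ℂ) - z‖ with ha
    set b := ‖(t x:ℂ) - w‖ with hbb
    have hA : 0 < a := norm_pos_iff.mpr (sub_ne_zero.mpr (hz x))
    have hB : 0 < b := norm_pos_iff.mpr (sub_ne_zero.mpr (hwne x))
    have hnsa : Complex.normSq ((t x:ℂ) - z) = a^2 := by
      rw [ha, Complex.sq_norm]
    have hnsb : Complex.normSq ((t x:ℂ) - w) = b^2 := by
      rw [hbb, Complex.sq_norm]
    rw [norm_div, norm_mul, Complex.norm_real, Real.norm_eq_abs, _root_.abs_of_nonneg (hp x),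
      hnsa, hnsb]
    rw [div_add_div _ _ (by positivity) (by positivity), div_div,
      div_le_div_iff₀ (by positivity) (by positivity)]
    nlinarith [mul_nonneg (mul_nonneg (hp x) (mul_pos hA hB).le) (sq_nonneg (a - b)),
      mul_pos hA hB, sq_nonneg (a-b), mul_nonneg (hp x) (sq_nonneg (a*b*(a-b)))]
  refine ⟨hBz, hBw, hprod, ?_⟩
  calc (∑' x, (p x:ℂ)/(((t x:ℂ)-z)*((t x:ℂ)-w))) * (z - w)
      = ∑' x, (p x:ℂ)/(((t x:ℂ)-z)*((t x:ℂ)-w)) * (z - w) := (tsum_mul_right).symm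
    _ = ∑' x, ((p x:ℂ)*(1/((t x:ℂ)-z) - (t x:ℂ)/(1+(t x:ℂ)^2))
          - (p x:ℂ)*(1/((t x:ℂ)-w) - (t x:ℂ)/(1+(t x:ℂ)^2))) := by
        refine tsum_congr (fun x => ?_)
        rw [← mul_sub, partial_frac (t x) z w (hz x) (hwne x)]
        ring
    _ = _ := Summable.tsum_sub hBz hBw

lemma polar_sum {X : Type*} (f g : X → ℂ) (p : X → ℝ) (hp : ∀ x, 0 ≤ p x)
    (hf : Summable (fun x => ‖f x‖^2 * p x)) (hg : Summable (fun x => ‖g x‖^2 * p x)) (c : ℂ) :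
    Summable (fun x => f x * (starRingEnd ℂ) (g x) * (p x : ℂ)) ∧
    Summable (fun x => ‖f x + c * g x‖^2 * p x) ∧
    ∑' x, ‖f x + c * g x‖^2 * p x = (∑' x, ‖f x‖^2 * p x) + ‖c‖^2 * (∑' x, ‖g x‖^2 * p x)
      + 2 * ((starRingEnd ℂ) c * ∑' x, f x * (starRingEnd ℂ) (g x) * (p x : ℂ)).re := by
  have hcross : Summable (fun x => f x * (starRingEnd ℂ) (g x) * (p x : ℂ)) := by
    apply Summable.of_norm
    refine Summable.of_nonneg_of_le (fun x => norm_nonneg _) (fun x => ?_)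
      ((hf.add hg).div_const 2)
    rw [norm_mul, norm_mul, Complex.norm_real, Real.norm_eq_abs, _root_.abs_of_nonneg (hp x),
      RCLike.norm_conj]
    nlinarith [sq_nonneg (‖f x‖ - ‖g x‖), hp x, norm_nonneg (f x), norm_nonneg (g x),
      mul_nonneg (mul_nonneg (norm_nonneg (f x)) (norm_nonneg (g x))) (hp x),
      mul_le_mul_of_nonneg_right (sq_nonneg (‖f x‖ - ‖g x‖)) (hp x)]
  have hptwise : ∀ x, ‖f x + c * g x‖^2 * p x = ‖f x‖^2 * p x + ‖c‖^2 * (‖g x‖^2 * p x)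
      + 2 * ((starRingEnd ℂ) c * (f x * (starRingEnd ℂ) (g x) * (p x:ℂ))).re := by
    intro x
    have h1 : ∀ u : ℂ, ‖u‖^2 = Complex.normSq u := fun u => by
      rw [Complex.sq_norm]
    simp only [h1, Complex.normSq_add, Complex.normSq_mul]
    have h2 : ((starRingEnd ℂ) c * (f x * (starRingEnd ℂ) (g x) * (p x:ℂ))).re
        = (f x * (starRingEnd ℂ) (c * g x)).re * p x := by
      rw [map_mul]
      have h3 : (starRingEnd ℂ) c * (f x * (starRingEnd ℂ) (g x) * (p x:ℂ))
          = (p x:ℂ) * (f x * ((starRingEnd ℂ) c * (starRingEnd ℂ) (g x))) := by ring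
      rw [h3, Complex.re_ofReal_mul, mul_comm]
    rw [h2]
    ring
  have hterm2 : Summable (fun x => ‖c‖^2 * (‖g x‖^2 * p x)) := hg.mul_left _
  have hterm3 : Summable (fun x =>
      2 * ((starRingEnd ℂ) c * (f x * (starRingEnd ℂ) (g x) * (p x:ℂ))).re) := by
    have h4 : Summable (fun x => (starRingEnd ℂ) c * (f x * (starRingEnd ℂ) (g x) * (p x:ℂ))) :=
      hcross.mul_left _
    exact ((h4.hasSum.mapL Complex.reCLM).summable).mul_left 2
  have hsum : Summable (fun x => ‖f x + c * g x‖^2 * p x) := by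
    exact ((hf.add hterm2).add hterm3).congr (fun x => (hptwise x).symm)
  refine ⟨hcross, hsum, ?_⟩
  calc ∑' x, ‖f x + c * g x‖^2 * p x
      = ∑' x, (‖f x‖^2 * p x + ‖c‖^2 * (‖g x‖^2 * p x)
        + 2 * ((starRingEnd ℂ) c * (f x * (starRingEnd ℂ) (g x) * (p x:ℂ))).re) :=
        tsum_congr hptwise
    _ = (∑' x, ‖f x‖^2 * p x) + ‖c‖^2 * (∑' x, ‖g x‖^2 * p x)
        + 2 * ((starRingEnd ℂ) c * ∑' x, f x * (starRingEnd ℂ) (g x) * (p x:ℂ)).re := by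
        rw [Summable.tsum_add (hf.add hterm2) hterm3, Summable.tsum_add hf hterm2, tsum_mul_left]
        congr 1
        rw [tsum_mul_left, ← Complex.re_tsum (hcross.mul_left _), tsum_mul_left]

/-- `ψ` has a purely atomic Herglotz representation on the upper half-plane:
linear coefficient `c = 0` and purely atomic spectral measure `μ`. -/
def IsPurelyAtomicHerglotzRep (ψ : ℂ → ℂ) : Prop :=
  ∃ (b : ℝ) (μ : Measure ℝ),
    (∃ S : Set ℝ, S.Countable ∧ μ Sᶜ = 0) ∧
    (∫⁻ t, ENNReal.ofReal (1 / (1 + t ^ 2)) ∂μ < ⊤) ∧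
    ∀ z : ℂ, 0 < z.im →
      ψ z = (b : ℂ) + ∫ t, (1 / ((t : ℂ) - z) - (t : ℂ) / (1 + (t : ℂ) ^ 2)) ∂μ

/-- If `(α - φ)⁻¹` is NOT a purely atomic Herglotz function, then the discrete Hilbert
transform `H_v(Γ, Λ(α)) : ℓ²_v → ℓ²_{w(α)}` is not unitary. -/
theorem stmt_13 (γ : ℕ → ℝ) (hγ : Function.Injective γ) (v : ℕ → ℝ) (hv : ∀ n, 0 < v n)
    (hadm : Summable (fun n => v n / (1 + (γ n) ^ 2)))
    (φ : ℂ → ℂ)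
    (hφ : ∀ z : ℂ, 0 < z.im → φ z = ∑' n, (v n : ℂ) *
      (1 / ((γ n : ℂ) - z) - (γ n : ℂ) / (1 + (γ n : ℂ) ^ 2)))
    (α : ℝ)
    (hnotatomic : ¬ IsPurelyAtomicHerglotzRep (fun z => ((α : ℂ) - φ z)⁻¹))
    {ι : Type*} [Countable ι] (l : ι → ℝ) (hl : Function.Injective l)
    (hrange : ∀ x : ℝ, (∃ j, l j = x) ↔
      ((∀ n, x ≠ γ n) ∧ Summable (fun n => v n / (x - γ n) ^ 2) ∧
        ∑' n, v n * (1 / (γ n - x) - γ n / (1 + (γ n) ^ 2)) = α))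
    (w : ι → ℝ) (hw : ∀ j, w j = (∑' n, v n / (l j - γ n) ^ 2)⁻¹)
    (H : (ℕ → ℂ) → ι → ℂ)
    (hH : ∀ a j, H a j = ∑' n, a n * (v n : ℂ) / ((l j : ℂ) - (γ n : ℂ))) :
    ¬ ((∀ a : ℕ → ℂ, Summable (fun n => ‖a n‖ ^ 2 * v n) →
      Summable (fun j => ‖H a j‖ ^ 2 * w j) ∧
      ∑' j, ‖H a j‖ ^ 2 * w j = ∑' n, ‖a n‖ ^ 2 * v n) ∧
    (∀ b : ι → ℂ, Summable (fun j => ‖b j‖ ^ 2 * w j) →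
      ∃ a : ℕ → ℂ, Summable (fun n => ‖a n‖ ^ 2 * v n) ∧ ∀ j, H a j = b j)) := by
  rintro ⟨hiso, -⟩
  apply hnotatomic
  -- notation
  obtain ⟨ψ, hψdef⟩ : ∃ ψ : ℂ → ℂ, ∀ y, ψ y = ((α : ℂ) - φ y)⁻¹ := ⟨_, fun _ => rfl⟩
  have hfunext : (fun z => ((α : ℂ) - φ z)⁻¹) = ψ := funext fun y => (hψdef y).symm
  rw [hfunext]
  -- basic real facts about the level set points
  have hreal_ns : ∀ s t : ℝ, Complex.normSq ((t:ℂ) - (s:ℂ)) = (t - s)^2 := by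
    intro s t
    rw [← Complex.ofReal_sub, Complex.normSq_ofReal, sq]
  have hlj := fun j => (hrange (l j)).mp ⟨j, rfl⟩
  have hljne : ∀ j n, (γ n : ℂ) ≠ ((l j : ℝ) : ℂ) := by
    intro j n h
    exact (hlj j).1 n ((Complex.ofReal_inj.mp h).symm)
  have hγne : ∀ z : ℂ, z.im ≠ 0 → ∀ n, (γ n : ℂ) ≠ z := by
    intro z hz n h
    rw [← h] at hz
    exact hz (Complex.ofReal_im _)
  have hlne : ∀ z : ℂ, z.im ≠ 0 → ∀ j, ((l j : ℝ) : ℂ) ≠ z := by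
    intro z hz j h
    rw [← h] at hz
    exact hz (Complex.ofReal_im _)
  -- summability of v / |γ - z|²
  have hPz : ∀ z : ℂ, z.im ≠ 0 → Summable (fun n => v n / Complex.normSq ((γ n : ℂ) - z)) := by
    intro z hz
    obtain ⟨c, hc, hcle⟩ := normSq_sub_lower z hz
    refine Summable.of_nonneg_of_le
      (fun n => div_nonneg (hv n).le (Complex.normSq_nonneg _)) (fun n => ?_)
      (hadm.mul_left c⁻¹)
    have h1 := hcle (γ n)
    have h2 : (0:ℝ) < c * (1 + γ n ^ 2) := by positivity
    calc v n / Complex.normSq ((γ n : ℂ) - z) ≤ v n / (c * (1 + γ n ^ 2)) := by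
          gcongr
          exact (hv n).le
      _ = c⁻¹ * (v n / (1 + γ n ^ 2)) := by
          field_simp
  have hPl : ∀ j, Summable (fun n => v n / Complex.normSq ((γ n : ℂ) - ((l j : ℝ) : ℂ))) := by
    intro j
    refine ((hlj j).2.1.congr ?_)
    intro n
    rw [hreal_ns]
    rw [show (γ n - l j)^2 = (l j - γ n)^2 by ring]
  have hwpos : ∀ j, 0 < w j := by
    intro j
    rw [hw j]
    refine inv_pos.mpr (Summable.tsum_pos (hlj j).2.1 (fun n => div_nonneg (hv n).le (sq_nonneg _)) 0 ?_)
    have h1 : (l j - γ 0) ^ 2 ≠ 0 := pow_ne_zero _ (sub_ne_zero.mpr ((hlj j).1 0))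
    exact div_pos (hv 0) (lt_of_le_of_ne (sq_nonneg _) (Ne.symm h1))
  -- φ z = tsum, summability of Herglotz terms
  have hconjns : ∀ (y : ℂ) (t : ℝ), Complex.normSq ((t:ℂ) - (starRingEnd ℂ) y)
      = Complex.normSq ((t:ℂ) - y) := by
    intro y t
    rw [show (t:ℂ) - (starRingEnd ℂ) y = (starRingEnd ℂ) ((t:ℂ) - y) by
      rw [map_sub, Complex.conj_ofReal], Complex.normSq_conj]
  have hBsum : ∀ z : ℂ, z.im ≠ 0 →
      Summable (fun n => (v n : ℂ) * (1/((γ n:ℂ) - z) - (γ n:ℂ)/(1+(γ n:ℂ)^2))) := by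
    intro z hz
    exact (sum_partial_frac γ v (fun n => (hv n).le) hadm z z (hγne z hz) (hγne z hz)
      (hPz z hz) (hPz z hz)).1
  have hφim : ∀ z : ℂ, 0 < z.im → (φ z).im
      = z.im * ∑' n, v n / Complex.normSq ((γ n : ℂ) - z) := by
    intro z hz
    rw [hφ z hz, Complex.im_tsum (hBsum z hz.ne'), ← tsum_mul_left]
    refine tsum_congr (fun n => ?_)
    have h1 : ((γ n:ℂ)/(1+(γ n:ℂ)^2)) = ((γ n/(1+γ n^2) : ℝ) : ℂ) := by
      push_cast
      ring
    rw [h1, one_div]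
    simp only [Complex.mul_im, Complex.ofReal_re, Complex.ofReal_im, Complex.sub_im,
      Complex.sub_re, Complex.inv_im, zero_mul, sub_zero, add_zero, zero_sub, neg_neg]
    field_simp
  have hφne : ∀ z : ℂ, 0 < z.im → (α : ℂ) - φ z ≠ 0 := by
    intro z hz h
    have h2 : (φ z).im = 0 := by
      rw [← sub_eq_zero.mp h]
      exact Complex.ofReal_im α
    rw [hφim z hz] at h2
    have h3 : 0 < ∑' n, v n / Complex.normSq ((γ n : ℂ) - z) := by
      refine Summable.tsum_pos (hPz z hz.ne') (fun n => div_nonneg (hv n).le (Complex.normSq_nonneg _)) 0 ?_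
      exact div_pos (hv 0) (Complex.normSq_pos.mpr (sub_ne_zero.mpr (hγne z hz.ne' 0)))
    exact absurd h2 (ne_of_gt (mul_pos hz h3))
  have hψmul : ∀ z : ℂ, 0 < z.im → ((α : ℂ) - φ z) * ψ z = 1 := by
    intro z hz
    rw [hψdef]
    exact mul_inv_cancel₀ (hφne z hz)
  -- the α-sum at the level points
  have hαsum : ∀ j, ∑' n, (v n : ℂ) * (1/((γ n:ℂ) - ((l j:ℝ):ℂ)) - (γ n:ℂ)/(1+(γ n:ℂ)^2))
      = (α : ℂ) := by
    intro j
    have h1 : ∀ n, (v n : ℂ) * (1/((γ n:ℂ) - ((l j:ℝ):ℂ)) - (γ n:ℂ)/(1+(γ n:ℂ)^2))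
        = ((v n * (1/(γ n - l j) - γ n/(1+γ n^2)) : ℝ) : ℂ) := by
      intro n
      push_cast
      ring
    rw [tsum_congr h1, ← Complex.ofReal_tsum, (hlj j).2.2]
  -- test vectors
  obtain ⟨a, hadef⟩ : ∃ a : ℂ → ℕ → ℂ, ∀ z n, a z n = ψ z / ((γ n : ℂ) - z) :=
    ⟨_, fun _ _ => rfl⟩
  have hasum : ∀ z : ℂ, 0 < z.im → Summable (fun n => ‖a z n‖ ^ 2 * v n) := by
    intro z hz
    refine ((hPz z hz.ne').mul_left (‖ψ z‖^2)).congr (fun n => ?_)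
    have h1 : ‖a z n‖^2 = ‖ψ z‖^2 / Complex.normSq ((γ n:ℂ) - z) := by
      simp only [hadef]
      simp [norm_div, div_pow, Complex.sq_norm]
    rw [h1]
    ring
  have haHsum : ∀ z : ℂ, 0 < z.im → ∀ j,
      Summable (fun n => a z n * (v n : ℂ) / ((l j : ℂ) - (γ n : ℂ))) := by
    intro z hz j
    have hfrac : Summable (fun n => (v n:ℂ)/(((γ n:ℂ)-z)*((γ n:ℂ)-((l j:ℝ):ℂ)))) :=
      (sum_partial_frac γ v (fun n => (hv n).le) hadm z ((l j:ℝ):ℂ) (hγne z hz.ne')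
        (fun n => hljne j n) (hPz z hz.ne') (hPl j)).2.2.1
    refine (hfrac.mul_left (-ψ z)).congr (fun n => ?_)
    have n1 : (γ n:ℂ) - z ≠ 0 := sub_ne_zero.mpr (hγne z hz.ne' n)
    have n2 : (γ n:ℂ) - ((l j:ℝ):ℂ) ≠ 0 := sub_ne_zero.mpr (hljne j n)
    have n3 : ((l j:ℝ):ℂ) - (γ n:ℂ) ≠ 0 := fun h => n2 (by linear_combination -h)
    rw [hadef]
    field_simp [n1, n2, n3]
    ring
  have hHa : ∀ z : ℂ, 0 < z.im → ∀ j, H (a z) j = 1 / (z - ((l j : ℝ) : ℂ)) := by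
    intro z hz j
    have hzl : z - ((l j:ℝ):ℂ) ≠ 0 := fun h => (hlne z hz.ne' j) (sub_eq_zero.mp h).symm
    obtain ⟨hBz, hBl, hfrac, hid⟩ := sum_partial_frac γ v (fun n => (hv n).le) hadm z
      ((l j:ℝ):ℂ) (hγne z hz.ne') (fun n => hljne j n) (hPz z hz.ne') (hPl j)
    rw [hH]
    have h1 : ∀ n, a z n * (v n:ℂ)/((l j:ℂ) - (γ n:ℂ))
        = (-ψ z) * ((v n:ℂ)/(((γ n:ℂ)-z)*((γ n:ℂ)-((l j:ℝ):ℂ)))) := by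
      intro n
      have n1 : (γ n:ℂ) - z ≠ 0 := sub_ne_zero.mpr (hγne z hz.ne' n)
      have n2 : (γ n:ℂ) - ((l j:ℝ):ℂ) ≠ 0 := sub_ne_zero.mpr (hljne j n)
      have n3 : ((l j:ℝ):ℂ) - (γ n:ℂ) ≠ 0 := fun h => n2 (by linear_combination -h)
      rw [hadef]
      field_simp [n1, n2, n3]
      ring
    rw [tsum_congr h1, tsum_mul_left]
    have h2 : (∑' n, (v n:ℂ)/(((γ n:ℂ)-z)*((γ n:ℂ)-((l j:ℝ):ℂ))))
        = (φ z - (α:ℂ))/(z - ((l j:ℝ):ℂ)) := by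
      rw [eq_div_iff hzl, hid, ← hφ z hz, hαsum j]
    rw [h2]
    have h3 := hψmul z hz
    field_simp [hzl]
    linear_combination h3
  -- conclusions of the isometry hypothesis
  have hWsum : ∀ z : ℂ, 0 < z.im →
      Summable (fun j => w j / Complex.normSq (((l j : ℝ) : ℂ) - z)) := by
    intro z hz
    refine (hiso (a z) (hasum z hz)).1.congr (fun j => ?_)
    rw [hHa z hz j]
    have h1 : Complex.normSq (((l j:ℝ):ℂ) - z) = Complex.normSq (z - ((l j:ℝ):ℂ)) := by
      rw [← Complex.normSq_neg, neg_sub]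
    rw [h1]
    simp [norm_div, div_pow, Complex.sq_norm]
    ring
  have hwb : Summable (fun j => w j / (1 + (l j)^2)) := by
    refine (hWsum Complex.I (by simp)).congr (fun j => ?_)
    have h1 : Complex.normSq (((l j:ℝ):ℂ) - Complex.I) = 1 + (l j)^2 := by
      simp [Complex.normSq_apply, Complex.sub_re, Complex.sub_im]
      ring
    rw [h1]
  -- the atomic Herglotz sum
  obtain ⟨Φ, hΦdef⟩ : ∃ Φ : ℂ → ℂ, ∀ y, Φ y
      = ∑' j, (w j : ℂ) * (1/(((l j:ℝ):ℂ) - y) - ((l j:ℝ):ℂ)/(1+((l j:ℝ):ℂ)^2)) :=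
    ⟨_, fun _ => rfl⟩
  -- the key identity
  have hkey : ∀ z ζ : ℂ, 0 < z.im → 0 < ζ.im →
      Φ z - (starRingEnd ℂ) (Φ ζ) = ψ z - (starRingEnd ℂ) (ψ ζ) := by
    intro z ζ hz hζ
    have hζbarim : ((starRingEnd ℂ) ζ).im ≠ 0 := by
      rw [Complex.conj_im]
      exact neg_ne_zero.mpr hζ.ne'
    have hcz := hγne z hz.ne'
    have hcζbar := hγne _ hζbarim
    have hPconj : Summable (fun n => v n / Complex.normSq ((γ n:ℂ) - (starRingEnd ℂ) ζ)) :=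
      (hPz ζ hζ.ne').congr (fun n => by rw [hconjns])
    have hzζ : z - (starRingEnd ℂ) ζ ≠ 0 := by
      intro h
      have h2 : (z - (starRingEnd ℂ) ζ).im = z.im + ζ.im := by
        simp [Complex.sub_im, Complex.conj_im]
      rw [h] at h2
      simp only [Complex.zero_im] at h2
      nlinarith
    obtain ⟨hBz, hBζbar, hfracv, hidv⟩ := sum_partial_frac γ v (fun n => (hv n).le) hadm z
      ((starRingEnd ℂ) ζ) hcz hcζbar (hPz z hz.ne') hPconj
    have hWconj : Summable (fun j => w j / Complex.normSq (((l j:ℝ):ℂ) - (starRingEnd ℂ) ζ)) :=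
      (hWsum ζ hζ).congr (fun j => by rw [hconjns])
    obtain ⟨hLz, hLζbar, hfracw, hidw⟩ := sum_partial_frac l w (fun j => (hwpos j).le) hwb z
      ((starRingEnd ℂ) ζ) (hlne z hz.ne') (hlne _ hζbarim) (hWsum z hz) hWconj
    -- polarization : the two cross sums agree
    have hPQ : (∑' j, H (a z) j * (starRingEnd ℂ) (H (a ζ) j) * (w j:ℂ))
        = ∑' n, a z n * (starRingEnd ℂ) (a ζ n) * (v n:ℂ) := by
      have key : ∀ c : ℂ,
          ((starRingEnd ℂ) c * ∑' j, H (a z) j * (starRingEnd ℂ) (H (a ζ) j) * (w j:ℂ)).re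
          = ((starRingEnd ℂ) c * ∑' n, a z n * (starRingEnd ℂ) (a ζ n) * (v n:ℂ)).re := by
        intro c
        obtain ⟨hcrossv, hsumv, hexpv⟩ := polar_sum (a z) (a ζ) v (fun n => (hv n).le)
          (hasum z hz) (hasum ζ hζ) c
        obtain ⟨hcrossw, hsumw, hexpw⟩ := polar_sum (fun j => H (a z) j) (fun j => H (a ζ) j)
          w (fun j => (hwpos j).le) (hiso (a z) (hasum z hz)).1 (hiso (a ζ) (hasum ζ hζ)).1 c
        have hHadd : ∀ j, H (fun n => a z n + c * a ζ n) j = H (a z) j + c * H (a ζ) j := by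
          intro j
          rw [hH]
          have e1 : ∀ n, (a z n + c * a ζ n) * (v n:ℂ)/((l j:ℂ)-(γ n:ℂ))
              = a z n * (v n:ℂ)/((l j:ℂ)-(γ n:ℂ)) + c * (a ζ n * (v n:ℂ)/((l j:ℂ)-(γ n:ℂ))) := by
            intro n
            ring
          rw [tsum_congr e1, Summable.tsum_add (haHsum z hz j) ((haHsum ζ hζ j).mul_left c),
            tsum_mul_left, ← hH, ← hH]
        have hiso_s := (hiso (fun n => a z n + c * a ζ n) hsumv).2
        have e2 : ∑' j, ‖H (fun n => a z n + c * a ζ n) j‖^2 * w j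
            = ∑' j, ‖H (a z) j + c * H (a ζ) j‖^2 * w j :=
          tsum_congr (fun j => by rw [hHadd j])
        rw [e2, hexpw, hexpv, (hiso (a z) (hasum z hz)).2, (hiso (a ζ) (hasum ζ hζ)).2]
          at hiso_s
        linarith
      have k1 := key 1
      have k2 := key Complex.I
      simp only [map_one, one_mul] at k1
      apply Complex.ext
      · exact k1
      · have e3 : ∀ X : ℂ, ((starRingEnd ℂ) Complex.I * X).re = X.im := by
          intro X
          simp [Complex.conj_I]
        rw [e3, e3] at k2
        exact k2
    -- evaluate the two cross sums
    have hPval : (∑' n, a z n * (starRingEnd ℂ) (a ζ n) * (v n:ℂ)) * (z - (starRingEnd ℂ) ζ)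
        = ψ z * (starRingEnd ℂ) (ψ ζ) * (φ z - (starRingEnd ℂ) (φ ζ)) := by
      have e3 : ∀ n, a z n * (starRingEnd ℂ) (a ζ n) * (v n:ℂ)
          = (ψ z * (starRingEnd ℂ) (ψ ζ))
            * ((v n:ℂ)/(((γ n:ℂ)-z)*((γ n:ℂ)-(starRingEnd ℂ) ζ))) := by
        intro n
        rw [hadef, hadef, map_div₀, map_sub, Complex.conj_ofReal]
        have n1 : (γ n:ℂ) - z ≠ 0 := sub_ne_zero.mpr (hcz n)
        have n2 : (γ n:ℂ) - (starRingEnd ℂ) ζ ≠ 0 := sub_ne_zero.mpr (hcζbar n)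
        field_simp
      rw [tsum_congr e3, tsum_mul_left, mul_assoc, hidv]
      have e4 : ∑' n, (v n:ℂ)*(1/((γ n:ℂ)-(starRingEnd ℂ) ζ) - (γ n:ℂ)/(1+(γ n:ℂ)^2))
          = (starRingEnd ℂ) (φ ζ) := by
        rw [hφ ζ hζ, Complex.conj_tsum]
        refine tsum_congr (fun n => ?_)
        simp only [map_mul, map_sub, map_div₀, map_add, map_one, map_pow, Complex.conj_ofReal]
      rw [e4, ← hφ z hz]
    have hQval : (∑' j, H (a z) j * (starRingEnd ℂ) (H (a ζ) j) * (w j:ℂ))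
        * (z - (starRingEnd ℂ) ζ) = Φ z - (starRingEnd ℂ) (Φ ζ) := by
      have e5 : ∀ j, H (a z) j * (starRingEnd ℂ) (H (a ζ) j) * (w j:ℂ)
          = (w j:ℂ)/((((l j:ℝ):ℂ)-z)*(((l j:ℝ):ℂ)-(starRingEnd ℂ) ζ)) := by
        intro j
        rw [hHa z hz j, hHa ζ hζ j, map_div₀, map_one, map_sub, Complex.conj_ofReal]
        have n1 : z - ((l j:ℝ):ℂ) ≠ 0 := fun h => (hlne z hz.ne' j) (sub_eq_zero.mp h).symm
        have n2 : (starRingEnd ℂ) ζ - ((l j:ℝ):ℂ) ≠ 0 := by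
          intro h
          have := (sub_eq_zero.mp h).symm
          exact (hlne _ hζbarim j) this
        have n3 : ((l j:ℝ):ℂ) - z ≠ 0 := fun h => n1 (by linear_combination -h)
        have n4 : ((l j:ℝ):ℂ) - (starRingEnd ℂ) ζ ≠ 0 := fun h => n2 (by linear_combination -h)
        field_simp
        ring
      rw [tsum_congr e5, hidw]
      have e6 : ∑' j, (w j:ℂ)*(1/(((l j:ℝ):ℂ)-(starRingEnd ℂ) ζ) - ((l j:ℝ):ℂ)/(1+((l j:ℝ):ℂ)^2))
          = (starRingEnd ℂ) (Φ ζ) := by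
        rw [hΦdef, Complex.conj_tsum]
        refine tsum_congr (fun j => ?_)
        simp only [map_mul, map_sub, map_div₀, map_add, map_one, map_pow, Complex.conj_ofReal]
      rw [e6, hΦdef z]
    have hfin : Φ z - (starRingEnd ℂ) (Φ ζ)
        = ψ z * (starRingEnd ℂ) (ψ ζ) * (φ z - (starRingEnd ℂ) (φ ζ)) := by
      rw [← hQval, hPQ, hPval]
    have e7 := hψmul z hz
    have e8 : ((α:ℂ) - (starRingEnd ℂ) (φ ζ)) * (starRingEnd ℂ) (ψ ζ) = 1 := by
      have := congrArg (starRingEnd ℂ) (hψmul ζ hζ)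
      simpa [map_mul, map_sub, Complex.conj_ofReal] using this
    linear_combination hfin + ψ z * e8 - (starRingEnd ℂ) (ψ ζ) * e7
  -- constancy
  obtain ⟨b, hb⟩ : ∃ b : ℝ, ∀ z : ℂ, 0 < z.im → ψ z = (b : ℂ) + Φ z := by
    have hIim : (0:ℝ) < Complex.I.im := by simp
    have hr := hkey Complex.I Complex.I hIim hIim
    refine ⟨(ψ Complex.I - Φ Complex.I).re, fun z hz => ?_⟩
    have h1 : (starRingEnd ℂ) (ψ Complex.I - Φ Complex.I) = ψ Complex.I - Φ Complex.I := by
      rw [map_sub]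
      linear_combination hr
    have h2 : ψ Complex.I - Φ Complex.I = (((ψ Complex.I - Φ Complex.I).re : ℝ) : ℂ) :=
      (Complex.conj_eq_iff_re.mp h1).symm
    have h3 := hkey z Complex.I hz hIim
    have h4 : (starRingEnd ℂ) (ψ Complex.I) - (starRingEnd ℂ) (Φ Complex.I)
        = ψ Complex.I - Φ Complex.I := by
      rw [← map_sub]
      exact h1
    linear_combination -h3 + h4 + h2
  -- the measure
  refine ⟨b, Measure.sum (fun j => (ENNReal.ofReal (w j)) • Measure.dirac (l j)),
    ⟨Set.range l, Set.countable_range l, ?_⟩, ?_, ?_⟩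
  · rw [Measure.sum_apply _ ((Set.countable_range l).measurableSet.compl)]
    have h1 : ∀ j, ((ENNReal.ofReal (w j)) • Measure.dirac (l j)) (Set.range l)ᶜ = 0 := by
      intro j
      rw [Measure.smul_apply,
        Measure.dirac_apply' _ ((Set.countable_range l).measurableSet.compl)]
      rw [Set.indicator_of_notMem (by simp)]
      simp
    simp only [h1]
    exact tsum_zero
  · rw [lintegral_sum_measure]
    simp only [lintegral_smul_measure]
    have h1 : ∀ j, ∫⁻ t, ENNReal.ofReal (1/(1+t^2)) ∂(Measure.dirac (l j))
        = ENNReal.ofReal (1/(1+(l j)^2)) := by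
      intro j
      have hm : Measurable (fun t:ℝ => 1/(1+t^2)) := by fun_prop
      exact lintegral_dirac' _ hm.ennreal_ofReal
    calc ∑' j, ENNReal.ofReal (w j) * ∫⁻ t, ENNReal.ofReal (1/(1+t^2)) ∂(Measure.dirac (l j))
        = ∑' j, ENNReal.ofReal (w j / (1+(l j)^2)) := by
          refine tsum_congr (fun j => ?_)
          rw [h1 j, ← ENNReal.ofReal_mul (hwpos j).le]
          rw [show w j * (1/(1+(l j)^2)) = w j / (1+(l j)^2) by ring]
      _ = ENNReal.ofReal (∑' j, w j / (1+(l j)^2)) :=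
          (ENNReal.ofReal_tsum_of_nonneg
            (fun j => div_nonneg (hwpos j).le (by positivity)) hwb).symm
      _ < ⊤ := ENNReal.ofReal_lt_top
  · intro z hz
    have hint : ∫ t, (1 / ((t : ℂ) - z) - (t : ℂ) / (1 + (t : ℂ) ^ 2))
        ∂(Measure.sum (fun j => (ENNReal.ofReal (w j)) • Measure.dirac (l j))) = Φ z := by
      have hne : ∀ t:ℝ, (t:ℂ) ≠ z := by
        intro t h
        rw [← h] at hz
        simp at hz
      have hden : ∀ t:ℝ, (1:ℂ)+(t:ℂ)^2 ≠ 0 := by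
        intro t
        have e : (1:ℂ)+(t:ℂ)^2 = ((1+t^2:ℝ):ℂ) := by push_cast; ring
        rw [e]
        exact_mod_cast (by positivity : (1+t^2:ℝ) ≠ 0)
      have hfc : Continuous (fun t:ℝ => 1/((t:ℂ) - z) - (t:ℂ)/(1+(t:ℂ)^2)) := by
        refine Continuous.sub ?_ ?_
        · exact continuous_const.div (by fun_prop) (fun t => sub_ne_zero.mpr (hne t))
        · exact Complex.continuous_ofReal.div (by fun_prop) hden
      have hInt : Integrable (fun t:ℝ => 1/((t:ℂ) - z) - (t:ℂ)/(1+(t:ℂ)^2))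
          (Measure.sum (fun j => (ENNReal.ofReal (w j)) • Measure.dirac (l j))) := by
        refine ⟨hfc.aestronglyMeasurable, ?_⟩
        rw [hasFiniteIntegral_iff_norm, lintegral_sum_measure]
        simp only [lintegral_smul_measure]
        have h1 : ∀ j, ∫⁻ t, ENNReal.ofReal ‖1/((t:ℂ) - z) - (t:ℂ)/(1+(t:ℂ)^2)‖
            ∂(Measure.dirac (l j))
            = ENNReal.ofReal ‖1/(((l j:ℝ):ℂ) - z) - ((l j:ℝ):ℂ)/(1+((l j:ℝ):ℂ)^2)‖ := by
          intro j
          exact lintegral_dirac' _ (hfc.norm.measurable.ennreal_ofReal)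
        have hgsum : Summable (fun j => Real.sqrt (1 + Complex.normSq z)
            * (w j / Complex.normSq (((l j:ℝ):ℂ) - z) + w j / (1+(l j)^2)) / 2) :=
          (((hWsum z hz).add hwb).mul_left _).div_const 2
        calc ∑' j, ENNReal.ofReal (w j)
              * ∫⁻ t, ENNReal.ofReal ‖1/((t:ℂ) - z) - (t:ℂ)/(1+(t:ℂ)^2)‖ ∂(Measure.dirac (l j))
            ≤ ∑' j, ENNReal.ofReal (Real.sqrt (1 + Complex.normSq z)
              * (w j / Complex.normSq (((l j:ℝ):ℂ) - z) + w j / (1+(l j)^2)) / 2) := by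
              refine ENNReal.tsum_le_tsum (fun j => ?_)
              rw [h1 j, ← ENNReal.ofReal_mul (hwpos j).le]
              refine ENNReal.ofReal_le_ofReal ?_
              calc w j * ‖1/(((l j:ℝ):ℂ) - z) - ((l j:ℝ):ℂ)/(1+((l j:ℝ):ℂ)^2)‖
                  ≤ w j * (Real.sqrt (1 + Complex.normSq z)
                    * (1/Complex.normSq (((l j:ℝ):ℂ)-z) + 1/(1+(l j)^2)) / 2) :=
                    mul_le_mul_of_nonneg_left (kernel_bound (l j) z (hne (l j))) (hwpos j).le
                _ = Real.sqrt (1 + Complex.normSq z)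
                    * (w j / Complex.normSq (((l j:ℝ):ℂ) - z) + w j / (1+(l j)^2)) / 2 := by
                    ring
          _ = ENNReal.ofReal (∑' j, Real.sqrt (1 + Complex.normSq z)
              * (w j / Complex.normSq (((l j:ℝ):ℂ) - z) + w j / (1+(l j)^2)) / 2) := by
              refine (ENNReal.ofReal_tsum_of_nonneg (fun j => ?_) hgsum).symm
              have hn1 : 0 ≤ w j / Complex.normSq (((l j:ℝ):ℂ) - z) :=
                div_nonneg (hwpos j).le (Complex.normSq_nonneg _)
              have hn2 : 0 ≤ w j / (1+(l j)^2) := div_nonneg (hwpos j).le (by positivity)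
              positivity
          _ < ⊤ := ENNReal.ofReal_lt_top
      rw [integral_sum_measure hInt]
      simp only [integral_smul_measure]
      rw [hΦdef z]
      refine tsum_congr (fun j => ?_)
      rw [integral_dirac, ENNReal.toReal_ofReal (hwpos j).le]
      rw [Complex.real_smul]
    rw [hint]
    exact hb z hz
end

section
/- Let $\Gamma = (\gamma_n)$ and $\Lambda = (\lambda_j)$ be disjoint sequences of distinct complex numbers, $(v_n), (w_j)$ positive weights, with $\Lambda \subset (\Gamma,v)^*$. If the discrete Hilbert transform $H_v(\Gamma,\Lambda) : \ell^2_v \to \ell^2_w$, $(a_n) \mapsto (\sum_n a_n v_n/(\lambda_j - \gamma_n))_j$, is unitary, then $\Gamma \cup \Lambda$ is contained in a single circle or straight line in $\mathbb{C}$, provided $\Gamma \cup \Lambda$ contains at least four points. -/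
open Complex ComplexConjugate

lemma conj_ne_zero' {z : ℂ} (h : z ≠ 0) : conj z ≠ 0 := by
  intro hc
  apply h
  rw [← Complex.conj_conj z, hc, map_zero]

set_option maxHeartbeats 1000000 in
lemma core_identity (p q r p' q' r' : ℂ) (vn wj : ℝ)
    (hp : p ≠ 0) (hq' : q' ≠ 0) (hr : r ≠ 0) (hr' : r' ≠ 0) :
    ((vn : ℂ) * ((wj:ℂ) * (r⁻¹ * r'⁻¹))) * (q * p' / (p * q')) * ((p - r) * (q' - r'))
    = ((vn:ℂ) * ((q - r) * (p' - r'))) * ((wj:ℂ) * (r⁻¹ * r'⁻¹))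
      + ((vn:ℂ) * (-((q - p) * (q' - r')) + (q - p) * (q' - p'))) * ((wj:ℂ) * (p⁻¹ * r'⁻¹))
      + ((vn:ℂ) * ((q' - p') * (p - r) + (q - p) * (q' - p'))) * ((wj:ℂ) * (r⁻¹ * q'⁻¹))
      + ((vn:ℂ) * (-((q - p) * (q' - p')))) * ((wj:ℂ) * (p⁻¹ * q'⁻¹)) := by
  have c1 : p^2 * p⁻¹^2 = 1 := by rw [← mul_pow, mul_inv_cancel₀ hp, one_pow]
  have c2 : r^2 * r⁻¹^2 = 1 := by rw [← mul_pow, mul_inv_cancel₀ hr, one_pow]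
  have c3 : q'^2 * q'⁻¹^2 = 1 := by rw [← mul_pow, mul_inv_cancel₀ hq', one_pow]
  have c4 : r'^2 * r'⁻¹^2 = 1 := by rw [← mul_pow, mul_inv_cancel₀ hr', one_pow]
  field_simp
  ring

lemma norm_one_re_one {z : ℂ} (hn : ‖z‖ = 1) (hr : z.re = 1) : z = 1 := by
  have h2 : normSq z = 1 := by
    have := Complex.sq_norm z
    rw [← this, hn]; norm_num
  have h3 : z.re^2 + z.im^2 = 1 := by rwa [Complex.normSq_apply, ← pow_two, ← pow_two] at h2
  have him : z.im = 0 := by nlinarith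
  exact Complex.ext (by simp [hr]) (by simp [him])

lemma unimodular_const {ι : Type*} (q : ι → ℝ) (hq : ∀ j, 0 < q j)
    (U : ι → ℂ) (hU : ∀ j, ‖U j‖ = 1) (κ : ℂ) (hκ : ‖κ‖ = 1)
    (hsq : Summable q) (hsU : Summable (fun j => (q j : ℂ) * U j))
    (hts : ∑' j, (q j : ℂ) * U j = κ * ((∑' j, q j : ℝ) : ℂ)) :
    ∀ j, U j = κ := by
  have hκκ : conj κ * κ = 1 := by
    have h0 := mul_conj κ
    have h1 : normSq κ = 1 := by
      have h2 := Complex.sq_norm κ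
      rw [hκ] at h2
      rw [← h2]; norm_num
    rw [mul_comm] at h0
    rw [h0, h1]; norm_num
  have hre : ∀ j, (conj κ * ((q j : ℂ) * U j)).re = q j * (conj κ * U j).re := by
    intro j
    rw [show conj κ * ((q j : ℂ) * U j) = (q j : ℂ) * (conj κ * U j) by ring,
      Complex.re_ofReal_mul]
  have hsU2 : Summable (fun j => conj κ * ((q j : ℂ) * U j)) := hsU.mul_left (conj κ)
  have hrecl : Summable (fun j => (conj κ * ((q j : ℂ) * U j)).re) :=
    (Complex.hasSum_re hsU2.hasSum).summable
  set r : ι → ℝ := fun j => q j - (conj κ * ((q j : ℂ) * U j)).re with hr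
  have hsr : Summable r := hsq.sub hrecl
  have htr : ∑' j, r j = 0 := by
    rw [Summable.tsum_sub hsq hrecl]
    have h5 : ∑' j, (conj κ * ((q j : ℂ) * U j)).re
        = (∑' j, conj κ * ((q j : ℂ) * U j)).re :=
      ((Complex.hasSum_re hsU2.hasSum).tsum_eq).symm ▸ rfl
    rw [h5, tsum_mul_left, hts,
      show conj κ * (κ * ((∑' j, q j : ℝ):ℂ)) = (conj κ * κ) * ((∑' j, q j : ℝ):ℂ) by ring,
      hκκ, one_mul]
    simp
  have hnn : ∀ j, 0 ≤ r j := by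
    intro j
    rw [hr]
    simp only
    rw [hre]
    have h1 : (conj κ * U j).re ≤ 1 := by
      calc (conj κ * U j).re ≤ ‖conj κ * U j‖ := by
            exact Complex.re_le_norm _
        _ = 1 := by rw [norm_mul, RCLike.norm_conj, hκ, hU j, one_mul]
    nlinarith [hq j]
  have hz : ∀ j, r j = 0 := by
    intro j
    have h1 : r j ≤ 0 := htr ▸ Summable.le_tsum hsr j (fun k _ => hnn k)
    linarith [hnn j]
  intro j
  have h1 : (conj κ * U j).re = 1 := by
    have h6 := hz j
    rw [hr] at h6
    simp only at h6
    rw [hre] at h6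
    have := hq j
    nlinarith
  have h2 : conj κ * U j = 1 :=
    norm_one_re_one (by rw [norm_mul, RCLike.norm_conj, hκ, hU j, one_mul]) h1
  calc U j = (conj κ * κ) * U j := by rw [hκκ, one_mul]
    _ = κ * (conj κ * U j) := by ring
    _ = κ := by rw [h2, mul_one]

section KeyLemma
variable {ι : Type*} (γ : ℕ → ℂ) (l : ι → ℂ)
  (v : ℕ → ℝ) (w : ι → ℝ)

lemma hdiag (hdisj : ∀ n j, γ n ≠ l j) (hv : ∀ n, 0 < v n)
    (H : (ℕ → ℂ) → ι → ℂ)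
    (hH : ∀ a j, H a j = ∑' n, a n * (v n : ℂ) / (l j - γ n))
    (hiso : ∀ a : ℕ → ℂ, Summable (fun n => ‖a n‖ ^ 2 * v n) →
      Summable (fun j => ‖H a j‖ ^ 2 * w j) ∧
      ∑' j, ‖H a j‖ ^ 2 * w j = ∑' n, ‖a n‖ ^ 2 * v n) (n : ℕ) :
    Summable (fun j => w j * normSq ((l j - γ n)⁻¹)) ∧
      ∑' j, w j * normSq ((l j - γ n)⁻¹) = (v n)⁻¹ := by
  classical
  set a : ℕ → ℂ := fun p => if p = n then (1:ℂ) else 0 with ha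
  have hsa : Summable (fun p => ‖a p‖ ^ 2 * v p) := by
    apply summable_of_ne_finset_zero (s := {n})
    intro p hp
    simp only [Finset.mem_singleton] at hp
    simp [ha, hp]
  obtain ⟨hS, hEq⟩ := hiso a hsa
  have hHa : ∀ j, H a j = (v n : ℂ) * (l j - γ n)⁻¹ := by
    intro j
    rw [hH]
    rw [tsum_eq_single n]
    · simp [ha, div_eq_mul_inv]
    · intro p hp; simp [ha, hp]
  have hrhs : ∑' p, ‖a p‖ ^ 2 * v p = v n := by
    rw [tsum_eq_single n]
    · simp [ha]
    · intro p hp; simp [ha, hp]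
  have hfun : ∀ j, ‖H a j‖ ^ 2 * w j = v n ^ 2 * (w j * normSq ((l j - γ n)⁻¹)) := by
    intro j
    have h2 : ‖(l j - γ n)⁻¹‖ ^ 2 = normSq ((l j - γ n)⁻¹) := by
      rw [Complex.sq_norm]
    rw [hHa j, norm_mul, mul_pow, h2, Complex.norm_real, Real.norm_eq_abs,
      abs_of_pos (hv n)]
    ring
  rw [hrhs] at hEq
  have hS' : Summable (fun j => v n ^ 2 * (w j * normSq ((l j - γ n)⁻¹))) := by
    apply hS.congr; intro j; rw [hfun j]
  have hvn2 : (v n ^ 2) ≠ 0 := pow_ne_zero 2 (ne_of_gt (hv n))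
  constructor
  · exact (summable_mul_left_iff hvn2).mp hS'
  · have h1 : v n ^ 2 * ∑' j, (w j * normSq ((l j - γ n)⁻¹)) = v n := by
      rw [← tsum_mul_left]
      calc ∑' j, v n ^ 2 * (w j * normSq ((l j - γ n)⁻¹))
          = ∑' j, ‖H a j‖ ^ 2 * w j := tsum_congr (fun j => (hfun j).symm)
        _ = v n := hEq
    have hvn := (hv n).ne'
    apply mul_left_cancel₀ hvn2
    rw [h1]
    field_simp

-- helper: for given unit d, the isometry identity applied to e_n + d e_m
lemma pair_iso (hv : ∀ n, 0 < v n)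
    (H : (ℕ → ℂ) → ι → ℂ)
    (hH : ∀ a j, H a j = ∑' n, a n * (v n : ℂ) / (l j - γ n))
    (hiso : ∀ a : ℕ → ℂ, Summable (fun n => ‖a n‖ ^ 2 * v n) →
      Summable (fun j => ‖H a j‖ ^ 2 * w j) ∧
      ∑' j, ‖H a j‖ ^ 2 * w j = ∑' n, ‖a n‖ ^ 2 * v n)
    (n m : ℕ) (hnm : n ≠ m) (d : ℂ) (hd : ‖d‖ = 1) :
    Summable (fun j => normSq ((v n : ℂ) * (l j - γ n)⁻¹ + d * ((v m : ℂ) * (l j - γ m)⁻¹)) * w j) ∧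
    ∑' j, normSq ((v n : ℂ) * (l j - γ n)⁻¹ + d * ((v m : ℂ) * (l j - γ m)⁻¹)) * w j = v n + v m := by
  classical
  set a : ℕ → ℂ := fun p => if p = n then (1:ℂ) else if p = m then d else 0 with ha
  have hsa : Summable (fun p => ‖a p‖ ^ 2 * v p) := by
    apply summable_of_ne_finset_zero (s := {n, m})
    intro p hp
    simp only [Finset.mem_insert, Finset.mem_singleton, not_or] at hp
    simp [ha, hp.1, hp.2]
  obtain ⟨hS, hEq⟩ := hiso a hsa
  have hHa : ∀ j, H a j = (v n : ℂ) * (l j - γ n)⁻¹ + d * ((v m : ℂ) * (l j - γ m)⁻¹) := by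
    intro j
    rw [hH]
    rw [tsum_eq_sum (s := {n, m}) (by
      intro p hp
      simp only [Finset.mem_insert, Finset.mem_singleton, not_or] at hp
      simp [ha, hp.1, hp.2])]
    rw [Finset.sum_pair hnm]
    simp only [ha, if_pos rfl, if_neg (Ne.symm hnm), if_pos rfl]
    simp [div_eq_mul_inv]
    ring
  have hrhs : ∑' p, ‖a p‖ ^ 2 * v p = v n + v m := by
    rw [tsum_eq_sum (s := {n, m}) (by
      intro p hp
      simp only [Finset.mem_insert, Finset.mem_singleton, not_or] at hp
      simp [ha, hp.1, hp.2])]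
    rw [Finset.sum_pair hnm]
    simp [ha, if_neg (Ne.symm hnm), hd]
  have hfun : ∀ j, ‖H a j‖ ^ 2 * w j
      = normSq ((v n : ℂ) * (l j - γ n)⁻¹ + d * ((v m : ℂ) * (l j - γ m)⁻¹)) * w j := by
    intro j
    rw [hHa j, Complex.sq_norm]
  constructor
  · exact hS.congr hfun
  · rw [← hrhs, ← hEq]
    exact tsum_congr (fun j => (hfun j).symm)

lemma hoff (hv : ∀ n, 0 < v n) (hw : ∀ j, 0 < w j)
    (H : (ℕ → ℂ) → ι → ℂ)
    (hH : ∀ a j, H a j = ∑' n, a n * (v n : ℂ) / (l j - γ n))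
    (hiso : ∀ a : ℕ → ℂ, Summable (fun n => ‖a n‖ ^ 2 * v n) →
      Summable (fun j => ‖H a j‖ ^ 2 * w j) ∧
      ∑' j, ‖H a j‖ ^ 2 * w j = ∑' n, ‖a n‖ ^ 2 * v n)
    (hdg : ∀ n : ℕ, Summable (fun j => w j * normSq ((l j - γ n)⁻¹)) ∧
      ∑' j, w j * normSq ((l j - γ n)⁻¹) = (v n)⁻¹)
    (hpr : ∀ (n m : ℕ), n ≠ m → ∀ d : ℂ, ‖d‖ = 1 →
      Summable (fun j => normSq ((v n : ℂ) * (l j - γ n)⁻¹ + d * ((v m : ℂ) * (l j - γ m)⁻¹)) * w j) ∧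
      ∑' j, normSq ((v n : ℂ) * (l j - γ n)⁻¹ + d * ((v m : ℂ) * (l j - γ m)⁻¹)) * w j = v n + v m)
    (n m : ℕ) (hnm : n ≠ m) :
    Summable (fun j => (w j : ℂ) * ((l j - γ n)⁻¹ * conj ((l j - γ m)⁻¹))) ∧
      ∑' j, (w j : ℂ) * ((l j - γ n)⁻¹ * conj ((l j - γ m)⁻¹)) = 0 := by
  classical
  set X : ι → ℂ := fun j => (v n : ℂ) * (l j - γ n)⁻¹ with hX
  set Y : ι → ℂ := fun j => (v m : ℂ) * (l j - γ m)⁻¹ with hY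
  set c : ι → ℂ := fun j => X j * conj (Y j) with hc
  -- diagonal sums
  have hDn : Summable (fun j => normSq (X j) * w j) ∧ ∑' j, normSq (X j) * w j = v n := by
    have h1 := (hdg n).1
    have hfun : ∀ j, normSq (X j) * w j = v n ^ 2 * (w j * normSq ((l j - γ n)⁻¹)) := by
      intro j; rw [hX]; simp only [normSq_mul, Complex.normSq_ofReal]; ring
    constructor
    · exact (h1.mul_left (v n ^ 2)).congr (fun j => (hfun j).symm)
    · rw [tsum_congr hfun, tsum_mul_left, (hdg n).2, sq, mul_assoc,
        mul_inv_cancel₀ (hv n).ne', mul_one]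
  have hDm : Summable (fun j => normSq (Y j) * w j) ∧ ∑' j, normSq (Y j) * w j = v m := by
    have h1 := (hdg m).1
    have hfun : ∀ j, normSq (Y j) * w j = v m ^ 2 * (w j * normSq ((l j - γ m)⁻¹)) := by
      intro j; rw [hY]; simp only [normSq_mul, Complex.normSq_ofReal]; ring
    constructor
    · exact (h1.mul_left (v m ^ 2)).congr (fun j => (hfun j).symm)
    · rw [tsum_congr hfun, tsum_mul_left, (hdg m).2, sq, mul_assoc,
        mul_inv_cancel₀ (hv m).ne', mul_one]
  -- d = 1
  have hp1 := hpr n m hnm 1 (by norm_num)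
  have hid1 : ∀ j, normSq (X j + 1 * Y j) * w j
      = normSq (X j) * w j + normSq (Y j) * w j + 2 * ((c j).re * w j) := by
    intro j
    rw [one_mul, Complex.normSq_add]
    rw [hc]
    ring
  have hsre : Summable (fun j => (c j).re * w j) := by
    have h2 : Summable (fun j => normSq (X j + 1 * Y j) * w j
        - normSq (X j) * w j - normSq (Y j) * w j) := (hp1.1.sub hDn.1).sub hDm.1
    have h3 := h2.mul_left (1/2 : ℝ)
    apply h3.congr
    intro j
    have := hid1 j
    nlinarith [this]
  have htre : ∑' j, (c j).re * w j = 0 := by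
    have h2 : ∑' j, (normSq (X j + 1 * Y j) * w j
        - normSq (X j) * w j - normSq (Y j) * w j) = 0 := by
      rw [Summable.tsum_sub (hp1.1.sub hDn.1) hDm.1, Summable.tsum_sub hp1.1 hDn.1, hp1.2, hDn.2, hDm.2]
      ring
    have h4 : ∀ j, (c j).re * w j = (1/2) * (normSq (X j + 1 * Y j) * w j
        - normSq (X j) * w j - normSq (Y j) * w j) := by
      intro j; have := hid1 j; nlinarith [this]
    rw [tsum_congr h4, tsum_mul_left, h2]
    ring
  -- d = I
  have hpI := hpr n m hnm I (by simp)
  have hidI : ∀ j, normSq (X j + I * Y j) * w j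
      = normSq (X j) * w j + normSq (Y j) * w j + 2 * ((c j).im * w j) := by
    intro j
    rw [Complex.normSq_add]
    have h4 : normSq (I * Y j) = normSq (Y j) := by
      rw [normSq_mul, Complex.normSq_I, one_mul]
    have h5 : (X j * conj (I * Y j)).re = (c j).im := by
      rw [map_mul, hc]
      simp only [Complex.conj_I]
      have h6 : X j * (-I * conj (Y j)) = -(I * (X j * conj (Y j))) := by ring
      rw [h6, Complex.neg_re, Complex.I_mul_re]
      simp
    rw [h4, h5]
    ring
  have hsim : Summable (fun j => (c j).im * w j) := by
    have h2 : Summable (fun j => normSq (X j + I * Y j) * w j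
        - normSq (X j) * w j - normSq (Y j) * w j) := (hpI.1.sub hDn.1).sub hDm.1
    have h3 := h2.mul_left (1/2 : ℝ)
    apply h3.congr
    intro j
    have := hidI j
    nlinarith [this]
  have htim : ∑' j, (c j).im * w j = 0 := by
    have h2 : ∑' j, (normSq (X j + I * Y j) * w j
        - normSq (X j) * w j - normSq (Y j) * w j) = 0 := by
      rw [Summable.tsum_sub (hpI.1.sub hDn.1) hDm.1, Summable.tsum_sub hpI.1 hDn.1, hpI.2, hDn.2, hDm.2]
      ring
    have h4 : ∀ j, (c j).im * w j = (1/2) * (normSq (X j + I * Y j) * w j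
        - normSq (X j) * w j - normSq (Y j) * w j) := by
      intro j; have := hidI j; nlinarith [this]
    rw [tsum_congr h4, tsum_mul_left, h2]
    ring
  -- complex sum g
  set g : ι → ℂ := fun j => (w j : ℂ) * c j with hg
  have hgs : Summable g := by
    apply Summable.of_norm
    apply Summable.of_nonneg_of_le (fun j => norm_nonneg _)
      (f := fun j => (1/2) * (normSq (X j) * w j + normSq (Y j) * w j))
    · intro j
      have h6 : ‖g j‖ = w j * ‖c j‖ := by
        rw [hg]
        simp only [norm_mul, Complex.norm_real, Real.norm_eq_abs, abs_of_pos (hw j)]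
      have h7 : ‖c j‖ = ‖X j‖ * ‖Y j‖ := by
        rw [hc, norm_mul, RCLike.norm_conj]
      have h8 : ‖X j‖ ^ 2 = normSq (X j) := by rw [Complex.sq_norm]
      have h9 : ‖Y j‖ ^ 2 = normSq (Y j) := by rw [Complex.sq_norm]
      rw [h6, h7]
      nlinarith [norm_nonneg (X j), norm_nonneg (Y j), sq_nonneg (‖X j‖ - ‖Y j‖), (hw j).le]
    · exact (hDn.1.add hDm.1).mul_left (1/2)
  have hre_eq : (fun j => (g j).re) = (fun j => (c j).re * w j) := by
    funext j
    rw [hg]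
    simp only [Complex.re_ofReal_mul]
    ring
  have him_eq : (fun j => (g j).im) = (fun j => (c j).im * w j) := by
    funext j
    rw [hg]
    simp only [Complex.mul_im, Complex.ofReal_re, Complex.ofReal_im]
    ring
  have hgt : ∑' j, g j = 0 := by
    have h1 := Complex.hasSum_re hgs.hasSum
    have h2 := Complex.hasSum_im hgs.hasSum
    rw [hre_eq] at h1
    rw [him_eq] at h2
    have hre0 : (∑' j, g j).re = 0 := by rw [← h1.tsum_eq, htre]
    have him0 : (∑' j, g j).im = 0 := by rw [← h2.tsum_eq, htim]
    exact Complex.ext hre0 him0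
  -- final conversion
  have hvnm : ((v n * v m : ℝ) : ℂ) ≠ 0 := by
    rw [ne_eq, Complex.ofReal_eq_zero]
    exact (mul_pos (hv n) (hv m)).ne'
  have hne : ((v n : ℂ) * (v m : ℂ)) ≠ 0 := by
    rw [← Complex.ofReal_mul]
    exact hvnm
  have hconv : ∀ j, (w j : ℂ) * ((l j - γ n)⁻¹ * conj ((l j - γ m)⁻¹))
      = (((v n * v m : ℝ) : ℂ))⁻¹ * g j := by
    intro j
    rw [hg, hc, hX, hY]
    simp only [map_mul, Complex.conj_ofReal, Complex.ofReal_mul]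
    rw [show ((v n:ℂ)*(v m:ℂ))⁻¹ * ((w j:ℂ) * ((v n:ℂ) * (l j - γ n)⁻¹ * ((v m:ℂ) * conj ((l j - γ m)⁻¹))))
        = (((v n:ℂ)*(v m:ℂ))⁻¹ * ((v n:ℂ)*(v m:ℂ))) * ((w j:ℂ) * ((l j - γ n)⁻¹ * conj ((l j - γ m)⁻¹))) from by ring,
      inv_mul_cancel₀ hne, one_mul]
  constructor
  · exact (hgs.mul_left _).congr (fun j => (hconv j).symm)
  · rw [tsum_congr hconv, tsum_mul_left, hgt, mul_zero]
end KeyLemma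
section Step2
variable {ι : Type*} (γ : ℕ → ℂ) (l : ι → ℂ) (v : ℕ → ℝ) (w : ι → ℝ)

set_option maxHeartbeats 2000000 in
lemma step2 (hγ : Function.Injective γ) (hdisj : ∀ n j, γ n ≠ l j)
    (hv : ∀ n, 0 < v n) (hw : ∀ j, 0 < w j)
    (hdg : ∀ n : ℕ, Summable (fun j => w j * normSq ((l j - γ n)⁻¹)) ∧
      ∑' j, w j * normSq ((l j - γ n)⁻¹) = (v n)⁻¹)
    (hof : ∀ n m : ℕ, n ≠ m →
      Summable (fun j => (w j : ℂ) * ((l j - γ n)⁻¹ * conj ((l j - γ m)⁻¹))) ∧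
      ∑' j, (w j : ℂ) * ((l j - γ n)⁻¹ * conj ((l j - γ m)⁻¹)) = 0)
    (n : ℕ) (hn0 : n ≠ 0) (hn1 : n ≠ 1) :
    ∀ j, ((l j - γ 1) * conj (l j - γ 0)) * ((γ n - γ 0) * conj (γ n - γ 1))
      = ((l j - γ 0) * conj (l j - γ 1)) * ((γ n - γ 1) * conj (γ n - γ 0)) := by
  classical
  have h01 : γ 0 ≠ γ 1 := fun h => absurd (hγ h) (by norm_num)
  have hA1 : γ n - γ 0 ≠ 0 := sub_ne_zero.mpr (fun h => hn0 (hγ h))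
  have hA2 : γ n - γ 1 ≠ 0 := sub_ne_zero.mpr (fun h => hn1 (hγ h))
  have hl0 : ∀ j, l j - γ 0 ≠ 0 := fun j => sub_ne_zero.mpr (Ne.symm (hdisj 0 j))
  have hl1 : ∀ j, l j - γ 1 ≠ 0 := fun j => sub_ne_zero.mpr (Ne.symm (hdisj 1 j))
  have hln : ∀ j, l j - γ n ≠ 0 := fun j => sub_ne_zero.mpr (Ne.symm (hdisj n j))
  set A1 : ℂ := γ n - γ 0 with hA1d
  set A2 : ℂ := γ n - γ 1 with hA2d
  set κ : ℂ := (A2 * conj A1) / (A1 * conj A2) with hκd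
  set U : ι → ℂ := fun j => ((l j - γ 1) * conj (l j - γ 0)) / ((l j - γ 0) * conj (l j - γ 1)) with hUd
  set q : ι → ℝ := fun j => v n * (w j * normSq ((l j - γ n)⁻¹)) with hqd
  have hUnorm : ∀ j, ‖U j‖ = 1 := by
    intro j
    rw [hUd]
    simp only [norm_div, norm_mul, RCLike.norm_conj]
    rw [mul_comm ‖l j - γ 1‖ ‖l j - γ 0‖]
    apply div_self
    exact mul_ne_zero (norm_ne_zero_iff.mpr (hl0 j)) (norm_ne_zero_iff.mpr (hl1 j))
  have hκnorm : ‖κ‖ = 1 := by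
    rw [hκd]
    simp only [norm_div, norm_mul, RCLike.norm_conj]
    rw [mul_comm ‖A2‖ ‖A1‖]
    apply div_self
    exact mul_ne_zero (norm_ne_zero_iff.mpr hA1) (norm_ne_zero_iff.mpr hA2)
  have hqpos : ∀ j, 0 < q j := by
    intro j
    rw [hqd]
    have h1 : 0 < normSq ((l j - γ n)⁻¹) := Complex.normSq_pos.mpr (inv_ne_zero (hln j))
    have := hv n
    have := hw j
    positivity
  have hqs : Summable q := ((hdg n).1.mul_left (v n))
  have hqt : ∑' j, q j = 1 := by
    rw [hqd, tsum_mul_left, (hdg n).2, mul_inv_cancel₀ (hv n).ne']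
  -- basic complex sequences
  set D : ι → ℂ := fun j => (w j : ℂ) * ((l j - γ n)⁻¹ * conj ((l j - γ n)⁻¹)) with hDd
  set S1 : ι → ℂ := fun j => (w j : ℂ) * ((l j - γ 0)⁻¹ * conj ((l j - γ n)⁻¹)) with hS1d
  set S2 : ι → ℂ := fun j => (w j : ℂ) * ((l j - γ n)⁻¹ * conj ((l j - γ 1)⁻¹)) with hS2d
  set S3 : ι → ℂ := fun j => (w j : ℂ) * ((l j - γ 0)⁻¹ * conj ((l j - γ 1)⁻¹)) with hS3d
  have hDs : Summable D ∧ ∑' j, D j = (((v n)⁻¹ : ℝ) : ℂ) := by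
    have heq : ∀ j, D j = (((w j * normSq ((l j - γ n)⁻¹) : ℝ)) : ℂ) := by
      intro j
      simp only [hDd]
      rw [show (l j - γ n)⁻¹ * conj ((l j - γ n)⁻¹) = ((normSq ((l j - γ n)⁻¹) : ℝ) : ℂ) from mul_conj _]
      rw [Complex.ofReal_mul]
    have hsum : Summable (fun j => ((w j * normSq ((l j - γ n)⁻¹) : ℝ) : ℂ)) :=
      Complex.summable_ofReal.mpr (hdg n).1
    constructor
    · exact hsum.congr (fun j => (heq j).symm)
    · rw [tsum_congr heq,
        (Complex.hasSum_ofReal.mpr (hdg n).1.hasSum).tsum_eq, (hdg n).2]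
  obtain ⟨hS1s, hS1t⟩ := hof 0 n (Ne.symm hn0)
  obtain ⟨hS2s, hS2t⟩ := hof n 1 hn1
  obtain ⟨hS3s, hS3t⟩ := hof 0 1 (by norm_num)
  set e1 : ℂ := (v n : ℂ) * (A2 * conj A1) with he1
  set e2 : ℂ := (v n : ℂ) * (-((γ 0 - γ 1) * conj A2) + (γ 0 - γ 1) * conj (γ 0 - γ 1)) with he2
  set e3 : ℂ := (v n : ℂ) * (conj (γ 0 - γ 1) * A1 + (γ 0 - γ 1) * conj (γ 0 - γ 1)) with he3
  set e4 : ℂ := (v n : ℂ) * (-((γ 0 - γ 1) * conj (γ 0 - γ 1))) with he4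
  -- pointwise expansion (scaled by A1 * conj A2)
  have hE : ∀ j, ((q j : ℂ) * U j) * (A1 * conj A2)
      = e1 * D j + e2 * S1 j + e3 * S2 j + e4 * S3 j := by
    intro j
    have inst := core_identity (l j - γ 0) (l j - γ 1) (l j - γ n)
      (conj (l j) - conj (γ 0)) (conj (l j) - conj (γ 1)) (conj (l j) - conj (γ n))
      (v n) (w j) (hl0 j)
      (by rw [← map_sub]; exact conj_ne_zero' (hl1 j))
      (hln j)
      (by rw [← map_sub]; exact conj_ne_zero' (hln j))
    simp only [hqd, hUd, hA1d, hA2d, hDd, hS1d, hS2d, hS3d, he1, he2, he3, he4, hκd]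
    rw [Complex.ofReal_mul, Complex.ofReal_mul]
    rw [show ((normSq ((l j - γ n)⁻¹) : ℝ) : ℂ) = (l j - γ n)⁻¹ * conj ((l j - γ n)⁻¹) from (mul_conj _).symm]
    simp only [map_sub, map_inv₀, conj_conj]
    linear_combination inst
  -- summability and sum of (q : ℂ) * U
  have hcomb : Summable (fun j => e1 * D j + e2 * S1 j + e3 * S2 j + e4 * S3 j) :=
    (((hDs.1.mul_left e1).add (hS1s.mul_left e2)).add (hS2s.mul_left e3)).add (hS3s.mul_left e4)
  have hden : A1 * conj A2 ≠ 0 := mul_ne_zero hA1 (conj_ne_zero' hA2)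
  have hvnC : (v n : ℂ) ≠ 0 := by
    rw [ne_eq, Complex.ofReal_eq_zero]
    exact (hv n).ne'
  have hcombt : ∑' j, (e1 * D j + e2 * S1 j + e3 * S2 j + e4 * S3 j) = e1 * (((v n)⁻¹ : ℝ) : ℂ) := by
    rw [Summable.tsum_add (((hDs.1.mul_left e1).add (hS1s.mul_left e2)).add (hS2s.mul_left e3)) (hS3s.mul_left e4),
      Summable.tsum_add ((hDs.1.mul_left e1).add (hS1s.mul_left e2)) (hS2s.mul_left e3),
      Summable.tsum_add (hDs.1.mul_left e1) (hS1s.mul_left e2),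
      tsum_mul_left, tsum_mul_left, tsum_mul_left, tsum_mul_left,
      hDs.2, hS1t, hS2t, hS3t]
    ring
  have hsUc : Summable (fun j => ((q j : ℂ) * U j) * (A1 * conj A2)) :=
    hcomb.congr (fun j => (hE j).symm)
  have hsU : Summable (fun j => (q j : ℂ) * U j) := by
    have h2 := hsUc.mul_right ((A1 * conj A2)⁻¹)
    apply h2.congr
    intro j
    rw [mul_assoc, mul_inv_cancel₀ hden, mul_one]
  have hts' : (∑' j, (q j : ℂ) * U j) * (A1 * conj A2) = e1 * (((v n)⁻¹ : ℝ) : ℂ) := by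
    rw [← tsum_mul_right, tsum_congr hE, hcombt]
  have hts : ∑' j, (q j : ℂ) * U j = κ * ((∑' j, q j : ℝ) : ℂ) := by
    rw [hqt]
    have hk : (∑' j, (q j : ℂ) * U j) = κ := by
      rw [hκd, eq_div_iff hden, hts', he1, Complex.ofReal_inv]
      rw [mul_comm ((v n : ℂ)) (A2 * conj A1), mul_assoc, mul_comm ((v n:ℂ)) (((v n):ℂ)⁻¹), inv_mul_cancel₀ hvnC, mul_one]
    rw [hk]
    simp
  have hUeq := unimodular_const q hqpos U hUnorm κ hκnorm hqs hsU hts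
  intro j
  have hUj := hUeq j
  simp only [hUd, hκd] at hUj
  rw [div_eq_div_iff (mul_ne_zero (hl0 j) (conj_ne_zero' (hl1 j))) hden] at hUj
  linear_combination hUj
end Step2

/-- Localization: if the discrete Hilbert transform `H_v(Γ,Λ) : ℓ²_v → ℓ²_w` is unitary
(an isometry of `ℓ²_v` onto `ℓ²_w`) and `Γ ∪ Λ` has at least four points, then
`Γ ∪ Λ` lies on a single circle or straight line in `ℂ`. -/
theorem stmt_14 {ι : Type*} [Countable ι] (γ : ℕ → ℂ) (hγ : Function.Injective γ)
    (l : ι → ℂ) (hl : Function.Injective l)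
    (hdisj : ∀ n j, γ n ≠ l j)
    (v : ℕ → ℝ) (hv : ∀ n, 0 < v n) (w : ι → ℝ) (hw : ∀ j, 0 < w j)
    (hΛ : ∀ j, Summable (fun n => v n / ‖l j - γ n‖ ^ 2))
    (H : (ℕ → ℂ) → ι → ℂ)
    (hH : ∀ a j, H a j = ∑' n, a n * (v n : ℂ) / (l j - γ n))
    (hiso : ∀ a : ℕ → ℂ, Summable (fun n => ‖a n‖ ^ 2 * v n) →
      Summable (fun j => ‖H a j‖ ^ 2 * w j) ∧
      ∑' j, ‖H a j‖ ^ 2 * w j = ∑' n, ‖a n‖ ^ 2 * v n)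
    (hsurj : ∀ b : ι → ℂ, Summable (fun j => ‖b j‖ ^ 2 * w j) →
      ∃ a : ℕ → ℂ, Summable (fun n => ‖a n‖ ^ 2 * v n) ∧ ∀ j, H a j = b j)
    (hfour : ∃ s : Finset ℂ, s.card = 4 ∧ ↑s ⊆ Set.range γ ∪ Set.range l) :
    ∃ (a c : ℝ) (b : ℂ), a * c < normSq b ∧
      ∀ z ∈ Set.range γ ∪ Set.range l,
        (a : ℂ) * normSq z + (starRingEnd ℂ) b * z + b * (starRingEnd ℂ) z + (c : ℂ) = 0 := by
  classical
  have hdg : ∀ n : ℕ, Summable (fun j => w j * normSq ((l j - γ n)⁻¹)) ∧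
      ∑' j, w j * normSq ((l j - γ n)⁻¹) = (v n)⁻¹ :=
    fun n => hdiag γ l v w hdisj hv H hH hiso n
  have hpr := pair_iso γ l v w hv H hH hiso
  have hof : ∀ n m : ℕ, n ≠ m →
      Summable (fun j => (w j : ℂ) * ((l j - γ n)⁻¹ * conj ((l j - γ m)⁻¹))) ∧
      ∑' j, (w j : ℂ) * ((l j - γ n)⁻¹ * conj ((l j - γ m)⁻¹)) = 0 :=
    fun n m hnm => hoff γ l v w hv hw H hH hiso hdg hpr n m hnm
  have hP := step2 γ l v w hγ hdisj hv hw hdg hof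
  -- ι is nonempty
  rcases isEmpty_or_nonempty ι with hemp | hne
  · exfalso
    have h := (hdg 0).2
    rw [tsum_empty] at h
    exact (inv_pos.mpr (hv 0)).ne' h.symm
  obtain ⟨j0⟩ := hne
  -- notation
  set ρ : ℂ → ℂ := fun z => (z - γ 1) * conj (z - γ 0) with hρ
  set ζ : ℂ := ρ (γ 2) with hζd
  have hγ21 : γ 2 - γ 1 ≠ 0 := sub_ne_zero.mpr (fun h => absurd (hγ h) (by norm_num))
  have hγ20 : γ 2 - γ 0 ≠ 0 := sub_ne_zero.mpr (fun h => absurd (hγ h) (by norm_num))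
  have hγ01 : γ 0 ≠ γ 1 := fun h => absurd (hγ h) (by norm_num)
  have hζ : ζ ≠ 0 := by
    rw [hζd, hρ]
    exact mul_ne_zero hγ21 (conj_ne_zero' hγ20)
  -- identities P(j, n) in ρ form
  have hPρ : ∀ (j : ι) (n : ℕ), n ≠ 0 → n ≠ 1 →
      ρ (l j) * conj (ρ (γ n)) = conj (ρ (l j)) * ρ (γ n) := by
    intro j n hn0 hn1
    have h := hP n hn0 hn1 j
    simp only [hρ, map_mul, conj_conj]
    linear_combination h
  -- anchor
  set x : ℂ := ρ (l j0) with hxd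
  have hx : x ≠ 0 := by
    rw [hxd, hρ]
    exact mul_ne_zero (sub_ne_zero.mpr (Ne.symm (hdisj 1 j0)))
      (conj_ne_zero' (sub_ne_zero.mpr (Ne.symm (hdisj 0 j0))))
  have hP2 : x * conj ζ = conj x * ζ := by
    have h := hPρ j0 2 (by norm_num) (by norm_num)
    rw [hxd, hζd]
    linear_combination h
  -- W z = 0 for all z in the union
  have hW : ∀ z ∈ Set.range γ ∪ Set.range l, conj ζ * ρ z = ζ * conj (ρ z) := by
    rintro z (⟨n, rfl⟩ | ⟨j, rfl⟩)
    · by_cases hn0 : n = 0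
      · subst hn0
        have : ρ (γ 0) = 0 := by rw [hρ]; simp
        rw [this, map_zero, mul_zero, mul_zero]
      by_cases hn1 : n = 1
      · subst hn1
        have : ρ (γ 1) = 0 := by rw [hρ]; simp
        rw [this, map_zero, mul_zero, mul_zero]
      by_cases hn2 : n = 2
      · subst hn2
        rw [← hζd]
        ring
      · have hPn : x * conj (ρ (γ n)) = conj x * ρ (γ n) := by
          have h := hPρ j0 n hn0 hn1
          rw [hxd]
          linear_combination h
        apply mul_left_cancel₀ hx
        linear_combination (ρ (γ n)) * hP2 - ζ * hPn
    · have h := hPρ j 2 (by norm_num) (by norm_num)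
      rw [← hζd] at h
      linear_combination h
  -- coefficients
  set B : ℂ := ζ * γ 0 - conj ζ * γ 1 with hBd
  set D : ℂ := conj ζ * γ 1 * conj (γ 0) - ζ * conj (γ 1) * γ 0 with hDd
  have hDre : D.re = 0 := by
    have hcD : conj D = -D := by
      rw [hDd]
      simp only [map_sub, map_mul, conj_conj]
      ring
    have := congrArg Complex.re hcD
    simp only [Complex.conj_re, Complex.neg_re] at this
    linarith
  have haC : ((-2 * ζ.im : ℝ) : ℂ) = -I * (conj ζ - ζ) := by
    apply Complex.ext <;>
      simp [Complex.mul_re, Complex.mul_im, Complex.sub_re, Complex.sub_im] <;> ring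
  have hcC : ((D.im : ℝ) : ℂ) = -I * D := by
    apply Complex.ext <;>
      simp [Complex.mul_re, Complex.mul_im, hDre]
  have hMI : ∀ z : ℂ, ((-2 * ζ.im : ℝ) : ℂ) * (normSq z : ℝ)
      + conj (-I * B) * z + (-I * B) * conj z + ((D.im : ℝ) : ℂ)
      = -I * (conj ζ * ρ z - ζ * conj (ρ z)) := by
    intro z
    rw [show ((normSq z : ℝ) : ℂ) = z * conj z from (mul_conj z).symm]
    rw [haC, hcC, hρ, hBd, hDd]
    simp only [map_mul, map_sub, map_neg, conj_conj, Complex.conj_I]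
    ring
  refine ⟨-2 * ζ.im, D.im, -I * B, ?_, ?_⟩
  · -- nondegeneracy
    have hkey : ∀ z : ℂ, (((-2 * ζ.im : ℝ)) : ℂ) * (normSq z : ℝ)
        + conj (-I * B) * z + (-I * B) * conj z + ((D.im : ℝ) : ℂ) = 0 →
        normSq (((-2 * ζ.im : ℝ) : ℂ) * z + (-I * B)) = normSq (-I * B) - (-2 * ζ.im) * D.im := by
      intro z hz
      have h1 : ((normSq (((-2 * ζ.im : ℝ) : ℂ) * z + (-I * B)) : ℝ) : ℂ)
          = ((-2 * ζ.im : ℝ) : ℂ) * ((((-2 * ζ.im : ℝ)) : ℂ) * (normSq z : ℝ)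
            + conj (-I * B) * z + (-I * B) * conj z + ((D.im : ℝ) : ℂ))
            + ((normSq (-I * B) : ℝ) : ℂ) - ((-2 * ζ.im : ℝ) : ℂ) * ((D.im : ℝ) : ℂ) := by
        rw [show ((normSq (((-2 * ζ.im : ℝ) : ℂ) * z + (-I * B)) : ℝ) : ℂ)
            = (((-2 * ζ.im : ℝ) : ℂ) * z + (-I * B)) * conj (((-2 * ζ.im : ℝ) : ℂ) * z + (-I * B))
            from (mul_conj _).symm,
          show ((normSq (-I * B) : ℝ) : ℂ) = (-I * B) * conj (-I * B) from (mul_conj _).symm,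
          show ((normSq z : ℝ) : ℂ) = z * conj z from (mul_conj z).symm]
        simp only [map_add, map_mul, Complex.conj_ofReal, conj_conj]
        ring
      rw [hz, mul_zero, zero_add] at h1
      have h2 := h1
      rw [← Complex.ofReal_mul, ← Complex.ofReal_sub] at h2
      exact_mod_cast h2
    have hz0 : (((-2 * ζ.im : ℝ)) : ℂ) * (normSq (γ 0) : ℝ)
        + conj (-I * B) * (γ 0) + (-I * B) * conj (γ 0) + ((D.im : ℝ) : ℂ) = 0 := by
      rw [hMI (γ 0)]
      have : ρ (γ 0) = 0 := by rw [hρ]; simp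
      rw [this, map_zero, mul_zero, mul_zero, sub_zero, mul_zero]
    have hz1 : (((-2 * ζ.im : ℝ)) : ℂ) * (normSq (γ 1) : ℝ)
        + conj (-I * B) * (γ 1) + (-I * B) * conj (γ 1) + ((D.im : ℝ) : ℂ) = 0 := by
      rw [hMI (γ 1)]
      have : ρ (γ 1) = 0 := by rw [hρ]; simp
      rw [this, map_zero, mul_zero, mul_zero, sub_zero, mul_zero]
    have hn0 := hkey (γ 0) hz0
    have hn1 := hkey (γ 1) hz1
    have hge : 0 ≤ normSq (-I * B) - (-2 * ζ.im) * D.im := by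
      rw [← hn0]; exact normSq_nonneg _
    rcases lt_or_eq_of_le hge with hlt | heq
    · linarith
    · exfalso
      have e0 : ((-2 * ζ.im : ℝ) : ℂ) * (γ 0) + (-I * B) = 0 := by
        apply normSq_eq_zero.mp
        rw [hn0, ← heq]
      have e1 : ((-2 * ζ.im : ℝ) : ℂ) * (γ 1) + (-I * B) = 0 := by
        apply normSq_eq_zero.mp
        rw [hn1, ← heq]
      have e2 : ((-2 * ζ.im : ℝ) : ℂ) * (γ 0 - γ 1) = 0 := by linear_combination e0 - e1
      have ha0 : ((-2 * ζ.im : ℝ) : ℂ) = 0 := by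
        rcases mul_eq_zero.mp e2 with h | h
        · exact h
        · exact absurd (sub_eq_zero.mp h) hγ01
      have hb0 : -I * B = 0 := by
        have := e0
        rw [ha0, zero_mul, zero_add] at this
        exact this
      have hB0 : B = 0 := by
        rcases mul_eq_zero.mp hb0 with h | h
        · exact absurd h (by simp [Complex.I_ne_zero])
        · exact h
      have hζim : ζ.im = 0 := by
        have : (-2 * ζ.im : ℝ) = 0 := by exact_mod_cast ha0
        linarith
      have hζr : conj ζ = ζ := Complex.conj_eq_iff_im.mpr hζim
      have : ζ * (γ 0 - γ 1) = 0 := by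
        rw [hBd, hζr] at hB0
        linear_combination hB0
      rcases mul_eq_zero.mp this with h | h
      · exact hζ h
      · exact absurd (sub_eq_zero.mp h) hγ01
  · -- all points satisfy the equation
    intro z hz
    rw [hMI z, hW z hz]
    ring
end

section
/- Let $\mathscr{H}$ be a Hilbert space of complex-valued functions on a set $\Omega \subset \mathbb{C}$ with $\dim \mathscr{H} \geq 2$, satisfying: (A1) if $f \in \mathscr{H}$ and $f(\lambda) = 0$ for $\lambda \in \Omega$ then $z \mapsto f(z)/(z-\lambda)$ extends to a function in $\mathscr{H}$; (A2) point evaluations are bounded (reproducing kernels $\kappa_\lambda$ exist for all $\lambda \in \Omega$). Suppose $(\kappa_{\gamma_n}/\|\kappa_{\gamma_n}\|)$ is a Riesz basis of $\mathscr{H}$ for distinct points $\gamma_n \in \Omega$, with biorthogonal basis $(g_n)$, and there exists $\lambda \in \Omega \setminus \Gamma$ with $\kappa_\lambda \neq 0$. Then there exists a function $E$ on $\Omega$, unique up to a nonzero multiplicative constant, and nonzero constants $E'(\gamma_n)$, such that $g_n(z) = \frac{E(z)}{E'(\gamma_n)(z - \gamma_n)}$ for all $n$ and $z \in \Omega \setminus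 \{\gamma_n\}$, and $E(z) \neq 0$ for all $z \in \Omega \setminus \Gamma$. -/
open Complex

/-- Let `𝓗` be a Hilbert space of functions on `Ω ⊂ ℂ` (realized via an injective linear
evaluation map `toFun` and reproducing kernels `κ`), of dimension at least 2, satisfying
the division axiom (A1). If the normalized reproducing kernels at distinct points
`γ n ∈ Ω` form a Riesz basis with biorthogonal basis `(g n)`, and some point of
`Ω \ Γ` has nonzero kernel, then there is a generating function `E`, unique up to a
nonzero multiplicative constant on `Ω \ Γ`, and nonzero constants `E'(γ n)`, with
`g n = E(z)/(E'(γ n)(z - γ n))` and `E ≠ 0` off `Γ`. -/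
theorem stmt_18 (Ω : Set ℂ) {H : Type*} [NormedAddCommGroup H] [InnerProductSpace ℂ H]
    [CompleteSpace H]
    (toFun : H →ₗ[ℂ] (Ω → ℂ)) (htoFun : Function.Injective toFun)
    (hdim : ∃ f g : H, LinearIndependent ℂ ![f, g])
    (κ : Ω → H) (hκ : ∀ (f : H) (p : Ω), toFun f p = (inner ℂ (κ p) f : ℂ))
    (hA1 : ∀ (f : H) (q : Ω), toFun f q = 0 →
      ∃ f₀ : H, ∀ p : Ω, toFun f p = ((p : ℂ) - (q : ℂ)) * toFun f₀ p)
    (γ : ℕ → Ω) (hγ : Function.Injective γ)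
    (e : HilbertBasis ℕ ℂ H) (T : H ≃L[ℂ] H)
    (hRiesz : ∀ n, T (e n) = (‖κ (γ n)‖)⁻¹ • κ (γ n))
    (g : ℕ → H)
    (hbio : ∀ n m, toFun (g n) (γ m) = if n = m then (‖κ (γ m)‖ : ℂ) else 0)
    (hpoint : ∃ p : Ω, ((p : ℂ) ∉ Set.range (fun n => ((γ n : Ω) : ℂ))) ∧ κ p ≠ 0) :
    ∃ (E : Ω → ℂ) (d : ℕ → ℂ), (∀ n, d n ≠ 0) ∧
      (∀ n, ∀ p : Ω, (p : ℂ) ≠ ((γ n : Ω) : ℂ) →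
        toFun (g n) p = E p / (d n * ((p : ℂ) - ((γ n : Ω) : ℂ)))) ∧
      (∀ p : Ω, (p : ℂ) ∉ Set.range (fun n => ((γ n : Ω) : ℂ)) → E p ≠ 0) ∧
      (∀ (E' : Ω → ℂ) (d' : ℕ → ℂ), (∀ n, d' n ≠ 0) →
        (∀ n, ∀ p : Ω, (p : ℂ) ≠ ((γ n : Ω) : ℂ) →
          toFun (g n) p = E' p / (d' n * ((p : ℂ) - ((γ n : Ω) : ℂ)))) →
        ∃ c : ℂ, c ≠ 0 ∧ ∀ p : Ω, (p : ℂ) ∉ Set.range (fun n => ((γ n : Ω) : ℂ)) →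
          E' p = c * E p) := by
  classical
  obtain ⟨lam, hlamR, hκlam⟩ := hpoint
  -- kernels at γ n are nonzero
  have hκn : ∀ n, κ (γ n) ≠ 0 := by
    intro n h0
    have h1 : T (e n) = 0 := by rw [hRiesz n, h0, smul_zero]
    have h2 : e n = 0 := by
      have h3 := congrArg T.symm h1
      simpa using h3
    have h3 := e.orthonormal.1 n
    rw [h2] at h3
    simp at h3
  have hκnc : ∀ n, (‖κ (γ n)‖ : ℂ) ≠ 0 := by
    intro n
    exact Complex.ofReal_ne_zero.mpr (norm_ne_zero_iff.mpr (hκn n))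
  have hγc : ∀ m n : ℕ, m ≠ n → ((γ m : Ω) : ℂ) ≠ ((γ n : Ω) : ℂ) := by
    intro m n hmn heq
    exact hmn (hγ (Subtype.ext heq))
  have hlamne : ∀ n, (lam : ℂ) ≠ ((γ n : Ω) : ℂ) := by
    intro n heq
    exact hlamR ⟨n, heq.symm⟩
  -- a vector orthogonal to all e m is zero
  have hebasis : ∀ x : H, (∀ m, (inner ℂ (e m) x : ℂ) = 0) → x = 0 := by
    intro x hx
    have h1 : e.repr x = 0 := by
      apply lp.ext
      funext m
      have h2 := e.repr_apply_apply x m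
      rw [h2, hx m]
      rfl
    have h3 := congrArg e.repr.symm h1
    simpa using h3
  -- the zero lemma : vanishing at all γ m implies zero
  have hZ : ∀ f : H, (∀ m, toFun f (γ m) = 0) → f = 0 := by
    intro f hf
    have hTe : ∀ m, (inner ℂ (e m)
        ((ContinuousLinearMap.adjoint (T : H →L[ℂ] H)) f) : ℂ) = 0 := by
      intro m
      rw [ContinuousLinearMap.adjoint_inner_right]
      have h1 : (T : H →L[ℂ] H) (e m) = (‖κ (γ m)‖)⁻¹ • κ (γ m) := hRiesz m
      rw [h1, ← algebraMap_smul ℂ ((‖κ (γ m)‖)⁻¹ : ℝ) (κ (γ m)), inner_smul_left]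
      rw [← hκ f (γ m), hf m, mul_zero]
    have hadj : (ContinuousLinearMap.adjoint (T : H →L[ℂ] H)) f = 0 := hebasis _ hTe
    have h5 := ContinuousLinearMap.adjoint_inner_right (T : H →L[ℂ] H) (T.symm f) f
    rw [hadj, inner_zero_right] at h5
    have h6 : (T : H →L[ℂ] H) (T.symm f) = f := T.apply_symm_apply f
    rw [h6] at h5
    exact inner_self_eq_zero.mp h5.symm
  -- one-term expansion
  have hL1 : ∀ (n : ℕ) (f : H), (∀ m, m ≠ n → toFun f (γ m) = 0) →
      f = ((toFun f (γ n)) / (‖κ (γ n)‖ : ℂ)) • g n := by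
    intro n f hf
    have h1 : f - ((toFun f (γ n)) / (‖κ (γ n)‖ : ℂ)) • g n = 0 := by
      apply hZ
      intro m
      simp only [map_sub, map_smul, Pi.sub_apply, Pi.smul_apply, smul_eq_mul]
      by_cases hm : m = n
      · subst hm
        rw [hbio m m, if_pos rfl, div_mul_cancel₀ _ (hκnc m), sub_self]
      · rw [hf m hm, hbio n m, if_neg (fun h => hm h.symm), mul_zero, sub_zero]
    exact sub_eq_zero.mp h1
  -- two-term expansion
  have hL2 : ∀ (n : ℕ), n ≠ 0 → ∀ (f : H), (∀ m, m ≠ 0 → m ≠ n → toFun f (γ m) = 0) →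
      f = ((toFun f (γ 0)) / (‖κ (γ 0)‖ : ℂ)) • g 0
        + ((toFun f (γ n)) / (‖κ (γ n)‖ : ℂ)) • g n := by
    intro n hn f hf
    have h1 : f - (((toFun f (γ 0)) / (‖κ (γ 0)‖ : ℂ)) • g 0
        + ((toFun f (γ n)) / (‖κ (γ n)‖ : ℂ)) • g n) = 0 := by
      apply hZ
      intro m
      simp only [map_sub, map_add, map_smul, Pi.sub_apply, Pi.add_apply, Pi.smul_apply,
        smul_eq_mul]
      by_cases hm0 : m = 0
      · subst hm0
        rw [hbio 0 0, if_pos rfl, hbio n 0, if_neg hn,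
          div_mul_cancel₀ _ (hκnc 0), mul_zero, add_zero, sub_self]
      · by_cases hmn : m = n
        · subst hmn
          rw [hbio m m, if_pos rfl, hbio 0 m, if_neg (fun h => hm0 h.symm),
            div_mul_cancel₀ _ (hκnc m), mul_zero, zero_add, sub_self]
        · rw [hf m hm0 hmn, hbio 0 m, if_neg (fun h => hm0 h.symm),
            hbio n m, if_neg (fun h => hmn h.symm), mul_zero, mul_zero, add_zero, sub_self]
    exact sub_eq_zero.mp h1

  -- totality of the biorthogonal family
  have hTκ : ∀ m, (‖κ (γ m)‖ : ℂ) • T (e m) = κ (γ m) := by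
    intro m
    rw [hRiesz m, ← algebraMap_smul ℂ ((‖κ (γ m)‖)⁻¹ : ℝ) (κ (γ m)),
      Complex.coe_algebraMap, smul_smul, Complex.ofReal_inv,
      mul_inv_cancel₀ (hκnc m), one_smul]
  have hgtotal : ∀ v : H, (∀ n, (inner ℂ (g n) v : ℂ) = 0) → v = 0 := by
    intro v hv
    set S := ContinuousLinearMap.adjoint ((T.symm : H ≃L[ℂ] H) : H →L[ℂ] H) with hS
    have hTsymmκ : ∀ m, T.symm (κ (γ m)) = (‖κ (γ m)‖ : ℂ) • e m := by
      intro m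
      have h1 := congrArg T.symm (hTκ m)
      rw [map_smul, T.symm_apply_apply] at h1
      exact h1.symm
    have hbS : ∀ n m, toFun (S (e n)) (γ m) = if n = m then (‖κ (γ m)‖ : ℂ) else 0 := by
      intro n m
      rw [hκ (S (e n)) (γ m), hS]
      rw [ContinuousLinearMap.adjoint_inner_right]
      have h1 : ((T.symm : H ≃L[ℂ] H) : H →L[ℂ] H) (κ (γ m)) = (‖κ (γ m)‖ : ℂ) • e m :=
        hTsymmκ m
      rw [h1, inner_smul_left, orthonormal_iff_ite.mp e.orthonormal m n,
        Complex.conj_ofReal]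
      by_cases hmn : m = n
      · subst hmn; simp
      · rw [if_neg hmn, if_neg (fun h => hmn h.symm), mul_zero]
    have hgS : ∀ n, g n = S (e n) := by
      intro n
      have h1 := hL1 n (S (e n)) (by
        intro m hm
        rw [hbS n m, if_neg (fun h => hm h.symm)])
      rw [h1, hbS n n, if_pos rfl, div_self (hκnc n), one_smul]
    have h2 : ∀ n, (inner ℂ (e n) (T.symm v) : ℂ) = 0 := by
      intro n
      have h3 := hv n
      rw [hgS n, hS, ContinuousLinearMap.adjoint_inner_left] at h3
      exact h3
    have h4 : T.symm v = 0 := hebasis _ h2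
    have h5 := congrArg T h4
    simpa using h5
  -- the generating function
  set E : Ω → ℂ := fun p => ((p : ℂ) - ((γ 0 : Ω) : ℂ)) * toFun (g 0) p with hE
  -- the fundamental relation g_n(p) (p - γ_n) = c_n E(p)
  have hrel : ∀ n, ∃ cn : ℂ, ∀ p : Ω,
      toFun (g n) p * ((p : ℂ) - ((γ n : Ω) : ℂ)) = cn * E p := by
    intro n
    by_cases hn : n = 0
    · subst hn
      exact ⟨1, fun p => by rw [hE]; ring⟩
    · have h0 : toFun (g n) (γ 0) = 0 := by rw [hbio n 0, if_neg hn]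
      obtain ⟨h, hh⟩ := hA1 (g n) (γ 0) h0
      have hhm : ∀ m, m ≠ 0 → m ≠ n → toFun h (γ m) = 0 := by
        intro m hm0 hmn
        have h1 := hh (γ m)
        rw [hbio n m, if_neg (fun hq => hmn hq.symm)] at h1
        exact ((mul_eq_zero.mp h1.symm).resolve_left
          (sub_ne_zero.mpr (hγc m 0 hm0)))
      have hdec := hL2 n hn h hhm
      have hgn : ∀ p : Ω, toFun h p = (toFun h (γ 0) / (‖κ (γ 0)‖ : ℂ)) * toFun (g 0) p
          + (toFun h (γ n) / (‖κ (γ n)‖ : ℂ)) * toFun (g n) p := by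
        intro p
        conv_lhs => rw [hdec]
        simp [Pi.add_apply, Pi.smul_apply, smul_eq_mul]
      have hhγn : (‖κ (γ n)‖ : ℂ) = (((γ n : Ω) : ℂ) - ((γ 0 : Ω) : ℂ)) * toFun h (γ n) := by
        have h1 := hh (γ n)
        rw [hbio n n, if_pos rfl] at h1
        exact h1
      refine ⟨(toFun h (γ 0) / (‖κ (γ 0)‖ : ℂ)) * (((γ 0 : Ω) : ℂ) - ((γ n : Ω) : ℂ)), ?_⟩
      intro p
      have h1 := hh p
      rw [hgn p] at h1
      set A := ((γ 0 : Ω) : ℂ)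
      set B := ((γ n : Ω) : ℂ)
      set X := (p : ℂ)
      set G := toFun (g n) p
      set G0 := toFun (g 0) p
      set a := toFun h (γ 0) / (‖κ (γ 0)‖ : ℂ)
      set u := toFun h (γ n)
      set k := (‖κ (γ n)‖ : ℂ)
      -- h1 : G = (X - A) * (a * G0 + u / k * G), hhγn : k = (B - A) * u
      have hBA : B - A ≠ 0 := sub_ne_zero.mpr (hγc n 0 hn)
      have hu : u ≠ 0 := by
        intro hu0
        rw [hu0, mul_zero] at hhγn
        exact hκnc n hhγn
      have huk : u / k = 1 / (B - A) := by
        rw [hhγn]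
        field_simp
      rw [huk] at h1
      rw [hE]
      show G * (X - B) = a * (A - B) * ((X - A) * G0)
      have h2 : G * (B - A) = (X - A) * (a * G0 * (B - A) + G) := by
        have h3 := congrArg (· * (B - A)) h1
        rw [h3]
        field_simp
        all_goals ring
      linear_combination -h2
  choose c hc using hrel
  -- a biorthogonal function vanishing at a point outside Γ vanishes off γ n
  have hB : ∀ (n : ℕ) (p : Ω), ((p : ℂ) ∉ Set.range (fun k => ((γ k : Ω) : ℂ))) →
      toFun (g n) p = 0 → ∀ q : Ω, (q : ℂ) ≠ ((γ n : Ω) : ℂ) → toFun (g n) q = 0 := by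
    intro n p hp hgp q hq
    obtain ⟨h, hh⟩ := hA1 (g n) p hgp
    have hpne : ∀ m, ((γ m : Ω) : ℂ) - (p : ℂ) ≠ 0 := by
      intro m h0
      exact hp ⟨m, show ((γ m : Ω) : ℂ) = (p : ℂ) from sub_eq_zero.mp h0⟩
    have hhm : ∀ m, m ≠ n → toFun h (γ m) = 0 := by
      intro m hm
      have h1 := hh (γ m)
      rw [hbio n m, if_neg (fun hq' => hm hq'.symm)] at h1
      exact (mul_eq_zero.mp h1.symm).resolve_left (hpne m)
    have hdec := hL1 n h hhm
    have hkey : (‖κ (γ n)‖ : ℂ) = (((γ n : Ω) : ℂ) - (p : ℂ)) * toFun h (γ n) := by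
      have h1 := hh (γ n)
      rw [hbio n n, if_pos rfl] at h1
      exact h1
    have hu : toFun h (γ n) ≠ 0 := by
      intro h0
      rw [h0, mul_zero] at hkey
      exact hκnc n hkey
    have h1 := hh q
    have h2 : toFun h q = (toFun h (γ n) / (‖κ (γ n)‖ : ℂ)) * toFun (g n) q := by
      conv_lhs => rw [hdec]
      simp [Pi.smul_apply, smul_eq_mul]
    rw [h2, hkey] at h1
    set B := ((γ n : Ω) : ℂ)
    set P := (p : ℂ)
    set Q := (q : ℂ)
    set u := toFun h (γ n)
    set G := toFun (g n) q
    -- h1 : G = (Q - P) * (u / ((B - P) * u) * G)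
    have hBP : B - P ≠ 0 := hpne n
    have h3 : u / (((B - P) * u)) = 1 / (B - P) := by
      rw [mul_comm, div_mul_cancel_left₀ hu, one_div]
    rw [h3] at h1
    have h4 : G * (B - P) = (Q - P) * G := by
      have h5 := congrArg (· * (B - P)) h1
      rw [h5]
      field_simp
      all_goals ring
    have h6 : G * (B - Q) = 0 := by linear_combination h4
    exact (mul_eq_zero.mp h6).resolve_right (sub_ne_zero.mpr (fun hx => hq hx.symm))
  -- E does not vanish off Γ
  have hEnv : ∀ p : Ω, ((p : ℂ) ∉ Set.range (fun k => ((γ k : Ω) : ℂ))) → E p ≠ 0 := by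
    intro p hp hEp
    have hpne : ∀ n, (p : ℂ) ≠ ((γ n : Ω) : ℂ) := by
      intro n h0
      exact hp ⟨n, h0.symm⟩
    have hgp : ∀ n, toFun (g n) p = 0 := by
      intro n
      have h1 := hc n p
      rw [hEp, mul_zero] at h1
      exact (mul_eq_zero.mp h1).resolve_right (sub_ne_zero.mpr (hpne n))
    have hglam : ∀ n, toFun (g n) lam = 0 := by
      intro n
      exact hB n p hp (hgp n) lam (hlamne n)
    have hκ0 : κ lam = 0 := by
      apply hgtotal
      intro n
      have h1 : (inner ℂ (κ lam) (g n) : ℂ) = 0 := by rw [← hκ (g n) lam]; exact hglam n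
      have h2 := congrArg (starRingEnd ℂ) h1
      rw [inner_conj_symm] at h2
      simpa using h2
    exact hκlam hκ0
  -- the constants are nonzero
  have hcne : ∀ n, c n ≠ 0 := by
    intro n hc0
    have hgq : ∀ q : Ω, (q : ℂ) ≠ ((γ n : Ω) : ℂ) → toFun (g n) q = 0 := by
      intro q hq
      have h1 := hc n q
      rw [hc0, zero_mul] at h1
      exact (mul_eq_zero.mp h1).resolve_right (sub_ne_zero.mpr hq)
    by_cases hn : n = 0
    · subst hn
      have h1 : E lam = 0 := by
        rw [hE]
        simp only
        rw [hgq lam (hlamne 0), mul_zero]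
      exact hEnv lam hlamR h1
    · -- swap argument
      have h0n : toFun (g 0) (γ n) = 0 := by
        rw [hbio 0 n, if_neg (fun h => hn h.symm)]
      obtain ⟨w, hw⟩ := hA1 (g 0) (γ n) h0n
      have hwm : ∀ m, m ≠ 0 → m ≠ n → toFun w (γ m) = 0 := by
        intro m hm0 hmn
        have h1 := hw (γ m)
        rw [hbio 0 m, if_neg (fun hq => hm0 hq.symm)] at h1
        exact (mul_eq_zero.mp h1.symm).resolve_left (sub_ne_zero.mpr (hγc m n hmn))
      have hdec := hL2 n hn w hwm
      have hw0 : (‖κ (γ 0)‖ : ℂ) = (((γ 0 : Ω) : ℂ) - ((γ n : Ω) : ℂ)) * toFun w (γ 0) := by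
        have h1 := hw (γ 0)
        rw [hbio 0 0, if_pos rfl] at h1
        exact h1
      have hwlam : toFun w lam
          = (toFun w (γ 0) / (‖κ (γ 0)‖ : ℂ)) * toFun (g 0) lam
          + (toFun w (γ n) / (‖κ (γ n)‖ : ℂ)) * toFun (g n) lam := by
        conv_lhs => rw [hdec]
        simp [Pi.add_apply, Pi.smul_apply, smul_eq_mul]
      rw [hgq lam (hlamne n), mul_zero, add_zero] at hwlam
      have h1 := hw lam
      rw [hwlam, hw0] at h1
      set A := ((γ 0 : Ω) : ℂ)
      set B := ((γ n : Ω) : ℂ)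
      set L := (lam : ℂ)
      set u := toFun w (γ 0)
      set G0 := toFun (g 0) lam
      have hAB : A - B ≠ 0 := sub_ne_zero.mpr (hγc 0 n (Ne.symm hn))
      have hu : u ≠ 0 := by
        intro h0
        rw [h0, mul_zero] at hw0
        exact hκnc 0 hw0
      have h3 : u / ((A - B) * u) = 1 / (A - B) := by
        rw [mul_comm, div_mul_cancel_left₀ hu, one_div]
      rw [h3] at h1
      have h4 : G0 * (A - B) = (L - B) * G0 := by
        have h5 := congrArg (· * (A - B)) h1
        rw [h5]
        field_simp
        all_goals ring
      have h6 : G0 * (A - L) = 0 := by linear_combination h4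
      have h7 : G0 = 0 :=
        (mul_eq_zero.mp h6).resolve_right (sub_ne_zero.mpr (fun hx => hlamne 0 hx.symm))
      have h8 : E lam = 0 := by
        rw [hE]
        simp only
        rw [show toFun (g 0) lam = G0 from rfl, h7, mul_zero]
      exact hEnv lam hlamR h8
  -- assemble
  refine ⟨E, fun n => (c n)⁻¹, fun n => inv_ne_zero (hcne n), ?_, hEnv, ?_⟩
  · intro n p hp
    have h1 := hc n p
    have h2 : (p : ℂ) - ((γ n : Ω) : ℂ) ≠ 0 := sub_ne_zero.mpr hp
    field_simp
    linear_combination h1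
  · intro E' d' hd' hrel'
    refine ⟨d' 0 * c 0, mul_ne_zero (hd' 0) (hcne 0), ?_⟩
    intro p hp
    have hp0 : (p : ℂ) ≠ ((γ 0 : Ω) : ℂ) := fun h0 => hp ⟨0, h0.symm⟩
    have h2 : (p : ℂ) - ((γ 0 : Ω) : ℂ) ≠ 0 := sub_ne_zero.mpr hp0
    have h1 := hc 0 p
    have h3 := hrel' 0 p hp0
    have hD : d' 0 * ((p : ℂ) - ((γ 0 : Ω) : ℂ)) ≠ 0 := mul_ne_zero (hd' 0) h2
    have h4 : toFun (g 0) p * (d' 0 * ((p : ℂ) - ((γ 0 : Ω) : ℂ))) = E' p :=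
      (eq_div_iff hD).mp h3
    linear_combination d' 0 * h1 - h4
end
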